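/- arXiv:2504.17061 — 6 statements merged into one kernel-verified Lean document; each statement's English description precedes it below -/
import Mathlib

section
/- Let ε ≥ 0 and let (X, u₀, {u₁,…,u_N}) be a setting with vN-M utilities in which X is the convex hull of finitely many points of the ambient real vector space. The following are equivalent: (i) the pair (u₀, {u₁,…,u_N}) satisfies ε-Strong Pareto; (ii) there exists a utilitarian aggregator w ∈ W₊₊ with ‖u₀ − w‖∞ ≤ ε/2. -/
open Finset

universe u

theorem motzkin : ∀ (n : ℕ) (ι : Type u) [Fintype ι]
    (g : ι → Fin n → ℝ) (h : ι → ℝ) (st : ι → Bool),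
    (¬ ∃ x : Fin n → ℝ, ∀ k, if st k then h k < ∑ j, g k j * x j else h k ≤ ∑ j, g k j * x j) →
    ∃ lam : ι → ℝ, (∀ k, 0 ≤ lam k) ∧ (∀ j, ∑ k, lam k * g k j = 0) ∧
      0 ≤ ∑ k, lam k * h k ∧ (0 < ∑ k, lam k * h k ∨ ∃ k, st k = true ∧ 0 < lam k) := by
  intro n
  induction n with
  | zero =>
    intro ι _ g h st infeas
    classical
    push_neg at infeas
    obtain ⟨k, hk⟩ := infeas (fun _ => 0)
    have hsum0 : (∑ j : Fin 0, g k j * 0) = 0 := by simp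
    rw [hsum0] at hk
    have hval : (∑ k' : ι, (if k' = k then (1:ℝ) else 0) * h k') = h k := by
      simp [ite_mul]
    have hkey : 0 ≤ h k ∧ (0 < h k ∨ st k = true) := by
      cases hst : st k with
      | true => rw [hst] at hk; simp only [if_true] at hk
                exact ⟨by linarith, Or.inr rfl⟩
      | false => rw [hst] at hk; simp only [Bool.false_eq_true, if_false] at hk
                 exact ⟨by linarith, Or.inl (by linarith)⟩
    refine ⟨fun k' => if k' = k then 1 else 0, ?_, fun j => j.elim0, ?_, ?_⟩
    · intro k'; dsimp only; split <;> norm_num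
    · rw [hval]; exact hkey.1
    · rcases hkey.2 with h1 | h1
      · exact Or.inl (by rw [hval]; exact h1)
      · exact Or.inr ⟨k, h1, by simp⟩
  | succ n ih =>
    intro ι _ g h st infeas
    classical
    set c : ι → ℝ := fun k => g k 0 with hc
    set Gv : (ι → ℝ) → (ι ⊕ ι × ι) → ℝ := fun v => Sum.elim
        (fun k => if c k = 0 then v k else 0)
        (fun pq => if 0 < c pq.1 ∧ c pq.2 < 0 then (-(c pq.2)) * v pq.1 + c pq.1 * v pq.2 else 0)
      with hGv
    set G : (ι ⊕ ι × ι) → Fin n → ℝ := fun b j => Gv (fun k => g k j.succ) b with hG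
    set H : (ι ⊕ ι × ι) → ℝ := fun b => Gv h b with hH
    set ST : (ι ⊕ ι × ι) → Bool := Sum.elim
        (fun k => if c k = 0 then st k else false)
        (fun pq => if 0 < c pq.1 ∧ c pq.2 < 0 then (st pq.1 || st pq.2) else false) with hST
    have infeas' : ¬ ∃ x : Fin n → ℝ, ∀ b,
        if ST b then H b < ∑ j, G b j * x j else H b ≤ ∑ j, G b j * x j := by
      rintro ⟨x', hx'⟩
      apply infeas
      set S : ι → ℝ := fun k => ∑ j, g k (Fin.succ j) * x' j with hS
      -- constraints with c k = 0 hold already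
      have hzero : ∀ k, c k = 0 → (if st k then h k < S k else h k ≤ S k) := by
        intro k hk
        have := hx' (Sum.inl k)
        simpa [hST, hGv, hG, hH, hS, hk] using this
      -- compatibility of bounds
      set B : ι → ℝ := fun k => (h k - S k) / c k with hB
      have hcompat : ∀ p q, 0 < c p → c q < 0 →
          (if st p || st q then B p < B q else B p ≤ B q) := by
        intro p q hp hq
        have hpq := hx' (Sum.inr (p, q))
        simp only [hST, hGv, hG, hH, Sum.elim_inr, if_pos (And.intro hp hq)] at hpq
        have hBq : B q = (S q - h q) / (-(c q)) := by
          rw [hB]; dsimp only; rw [div_neg, ← neg_div, neg_sub]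
        have hsum : (∑ j, ((-(c q)) * g p (Fin.succ j) + c p * g q (Fin.succ j)) * x' j)
            = (-(c q)) * S p + c p * S q := by
          rw [hS]; dsimp only; rw [Finset.mul_sum, Finset.mul_sum, ← Finset.sum_add_distrib]
          exact Finset.sum_congr rfl (fun j _ => by ring)
        rw [hsum] at hpq
        by_cases hstpq : st p || st q
        · rw [if_pos hstpq] at hpq ⊢
          rw [hBq]; simp only [hB]
          rw [div_lt_div_iff₀ hp (by linarith : (0:ℝ) < -(c q))]
          nlinarith
        · rw [if_neg hstpq] at hpq ⊢
          rw [hBq]; simp only [hB]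
          rw [div_le_div_iff₀ hp (by linarith : (0:ℝ) < -(c q))]
          nlinarith
      -- choose the new first coordinate x0
      obtain ⟨x0, hx0⟩ : ∃ x0 : ℝ,
          ∀ k, (0 < c k → (if st k then B k < x0 else B k ≤ x0)) ∧
               (c k < 0 → (if st k then x0 < B k else x0 ≤ B k)) := by
        have hcomple : ∀ p q, 0 < c p → c q < 0 → B p ≤ B q := by
          intro p q hp hq
          have := hcompat p q hp hq
          by_cases hb : (st p || st q) = true
          · rw [if_pos hb] at this; exact this.le
          · rw [if_neg hb] at this; exact this
        have hcomplt : ∀ p q, 0 < c p → c q < 0 → (st p = true ∨ st q = true) → B p < B q := by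
          intro p q hp hq hst
          have hb : (st p || st q) = true := by
            rcases hst with h1 | h1 <;> simp [h1]
          have := hcompat p q hp hq
          rwa [if_pos hb] at this
        by_cases hP : (Finset.univ.filter (fun k => 0 < c k)).Nonempty
        · obtain ⟨p0, hp0mem, hp0max⟩ := Finset.exists_max_image _ B hP
          have hp0 : 0 < c p0 := (Finset.mem_filter.1 hp0mem).2
          have hmax : ∀ k, 0 < c k → B k ≤ B p0 := fun k hk =>
            hp0max k (Finset.mem_filter.2 ⟨Finset.mem_univ k, hk⟩)
          by_cases hQ : (Finset.univ.filter (fun k => c k < 0)).Nonempty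
          · obtain ⟨q0, hq0mem, hq0min⟩ := Finset.exists_min_image _ B hQ
            have hq0 : c q0 < 0 := (Finset.mem_filter.1 hq0mem).2
            have hmin : ∀ k, c k < 0 → B q0 ≤ B k := fun k hk =>
              hq0min k (Finset.mem_filter.2 ⟨Finset.mem_univ k, hk⟩)
            rcases eq_or_lt_of_le (hcomple p0 q0 hp0 hq0) with heq | hlt
            · refine ⟨B p0, fun k => ⟨fun hk => ?_, fun hk => ?_⟩⟩
              · by_cases hstk : st k = true
                · rw [if_pos hstk]
                  have := hcomplt k q0 hk hq0 (Or.inl hstk)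
                  rw [← heq] at this; exact this
                · rw [if_neg hstk]; exact hmax k hk
              · by_cases hstk : st k = true
                · rw [if_pos hstk]
                  exact hcomplt p0 k hp0 hk (Or.inr hstk)
                · rw [if_neg hstk]; rw [heq]; exact hmin k hk
            · refine ⟨(B p0 + B q0)/2, fun k => ⟨fun hk => ?_, fun hk => ?_⟩⟩
              · have h1 : B k ≤ B p0 := hmax k hk
                have h2 : B k < (B p0 + B q0)/2 := by linarith
                split_ifs; exacts [h2, h2.le]
              · have h1 : B q0 ≤ B k := hmin k hk
                have h2 : (B p0 + B q0)/2 < B k := by linarith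
                split_ifs; exacts [h2, h2.le]
          · refine ⟨B p0 + 1, fun k => ⟨fun hk => ?_, fun hk => ?_⟩⟩
            · have h1 : B k ≤ B p0 := hmax k hk
              have h2 : B k < B p0 + 1 := by linarith
              split_ifs; exacts [h2, h2.le]
            · exact absurd ⟨k, Finset.mem_filter.2 ⟨Finset.mem_univ k, hk⟩⟩ hQ
        · by_cases hQ : (Finset.univ.filter (fun k => c k < 0)).Nonempty
          · obtain ⟨q0, hq0mem, hq0min⟩ := Finset.exists_min_image _ B hQ
            have hmin : ∀ k, c k < 0 → B q0 ≤ B k := fun k hk =>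
              hq0min k (Finset.mem_filter.2 ⟨Finset.mem_univ k, hk⟩)
            refine ⟨B q0 - 1, fun k => ⟨fun hk => ?_, fun hk => ?_⟩⟩
            · exact absurd ⟨k, Finset.mem_filter.2 ⟨Finset.mem_univ k, hk⟩⟩ hP
            · have h1 : B q0 ≤ B k := hmin k hk
              have h2 : B q0 - 1 < B k := by linarith
              split_ifs; exacts [h2, h2.le]
          · refine ⟨0, fun k => ⟨fun hk => ?_, fun hk => ?_⟩⟩
            · exact absurd ⟨k, Finset.mem_filter.2 ⟨Finset.mem_univ k, hk⟩⟩ hP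
            · exact absurd ⟨k, Finset.mem_filter.2 ⟨Finset.mem_univ k, hk⟩⟩ hQ
      refine ⟨Fin.cons x0 x', fun k => ?_⟩
      have hsum : (∑ j, g k j * (Fin.cons x0 x' : Fin (n+1) → ℝ) j) = c k * x0 + S k := by
        rw [Fin.sum_univ_succ]
        simp only [Fin.cons_zero, Fin.cons_succ, hS, hc]
      rw [hsum]
      rcases lt_trichotomy (c k) 0 with hck | hck | hck
      · have h1 := (hx0 k).2 hck
        have hBk : B k = (S k - h k) / (-(c k)) := by
          rw [hB]; dsimp only; rw [div_neg, ← neg_div, neg_sub]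
        rw [hBk] at h1
        by_cases hstk : st k = true
        · rw [if_pos hstk] at h1 ⊢
          rw [lt_div_iff₀ (by linarith : (0:ℝ) < -(c k))] at h1
          nlinarith
        · rw [if_neg hstk] at h1 ⊢
          rw [le_div_iff₀ (by linarith : (0:ℝ) < -(c k))] at h1
          nlinarith
      · have h1 := hzero k hck
        rw [hck, zero_mul, zero_add]
        exact h1
      · have h1 := (hx0 k).1 hck
        simp only [hB] at h1
        by_cases hstk : st k = true
        · rw [if_pos hstk] at h1 ⊢
          rw [div_lt_iff₀ hck] at h1
          nlinarith
        · rw [if_neg hstk] at h1 ⊢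
          rw [div_le_iff₀ hck] at h1
          nlinarith
    obtain ⟨Λ, hΛ0, hΛg, hΛh, hΛd⟩ := ih (ι ⊕ ι × ι) G H ST infeas'
    set lam : ι → ℝ := fun k =>
      (if c k = 0 then Λ (Sum.inl k) else 0)
      + (∑ q, if 0 < c k ∧ c q < 0 then (-(c q)) * Λ (Sum.inr (k, q)) else 0)
      + (∑ p, if 0 < c p ∧ c k < 0 then c p * Λ (Sum.inr (p, k)) else 0) with hlam
    have t1nn : ∀ k, (0:ℝ) ≤ (if c k = 0 then Λ (Sum.inl k) else 0) := by
      intro k; split_ifs; exacts [hΛ0 _, le_refl 0]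
    have t2nn : ∀ k q, (0:ℝ) ≤ (if 0 < c k ∧ c q < 0 then (-(c q)) * Λ (Sum.inr (k,q)) else 0) := by
      intro k q; split_ifs with hq
      · exact mul_nonneg (by linarith [hq.2]) (hΛ0 _)
      · exact le_refl 0
    have t3nn : ∀ p k, (0:ℝ) ≤ (if 0 < c p ∧ c k < 0 then c p * Λ (Sum.inr (p,k)) else 0) := by
      intro p k; split_ifs with hp
      · exact mul_nonneg (by linarith [hp.1]) (hΛ0 _)
      · exact le_refl 0
    have hnn : ∀ k, 0 ≤ lam k := by
      intro k
      simp only [hlam]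
      exact add_nonneg (add_nonneg (t1nn k) (Finset.sum_nonneg fun q _ => t2nn k q))
        (Finset.sum_nonneg fun p _ => t3nn p k)
    have comb : ∀ v : ι → ℝ, (∑ k, lam k * v k) = ∑ b, Λ b * Gv v b := by
      intro v
      have expand : ∀ k, lam k * v k =
          (if c k = 0 then Λ (Sum.inl k) * v k else 0)
          + (∑ q, if 0 < c k ∧ c q < 0 then Λ (Sum.inr (k,q)) * ((-(c q)) * v k) else 0)
          + (∑ p, if 0 < c p ∧ c k < 0 then Λ (Sum.inr (p,k)) * (c p * v k) else 0) := by
        intro k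
        simp only [hlam]
        rw [add_mul, add_mul, Finset.sum_mul, Finset.sum_mul]
        congr 1
        · congr 1
          · split_ifs <;> ring
          · exact Finset.sum_congr rfl fun q _ => by split_ifs <;> ring
        · exact Finset.sum_congr rfl fun p _ => by split_ifs <;> ring
      have e1 : (∑ k, if c k = 0 then Λ (Sum.inl k) * v k else 0)
          = ∑ k, Λ (Sum.inl k) * Gv v (Sum.inl k) :=
        Finset.sum_congr rfl fun k _ => by
          simp only [hGv, Sum.elim_inl, mul_ite, mul_zero]
      have e2 : ∀ (p q : ι), Λ (Sum.inr (p,q)) * Gv v (Sum.inr (p,q))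
          = (if 0 < c p ∧ c q < 0 then Λ (Sum.inr (p,q)) * ((-(c q)) * v p) else 0)
          + (if 0 < c p ∧ c q < 0 then Λ (Sum.inr (p,q)) * (c p * v q) else 0) := by
        intro p q; simp only [hGv, Sum.elim_inr]; split_ifs <;> ring
      have e3 : (∑ p, ∑ q, Λ (Sum.inr (p,q)) * Gv v (Sum.inr (p,q)))
          = (∑ p, ∑ q, if 0 < c p ∧ c q < 0 then Λ (Sum.inr (p,q)) * ((-(c q)) * v p) else 0)
          + (∑ p, ∑ q, if 0 < c p ∧ c q < 0 then Λ (Sum.inr (p,q)) * (c p * v q) else 0) := by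
        rw [← Finset.sum_add_distrib]
        exact Finset.sum_congr rfl fun p _ => by
          rw [← Finset.sum_add_distrib]
          exact Finset.sum_congr rfl fun q _ => e2 p q
      calc (∑ k, lam k * v k)
          = (∑ k, if c k = 0 then Λ (Sum.inl k) * v k else 0)
            + (∑ k, ∑ q, if 0 < c k ∧ c q < 0 then Λ (Sum.inr (k,q)) * ((-(c q)) * v k) else 0)
            + (∑ k, ∑ p, if 0 < c p ∧ c k < 0 then Λ (Sum.inr (p,k)) * (c p * v k) else 0) := by
            rw [← Finset.sum_add_distrib, ← Finset.sum_add_distrib]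
            exact Finset.sum_congr rfl fun k _ => expand k
        _ = ∑ b, Λ b * Gv v b := by
            rw [Fintype.sum_sum_type, Fintype.sum_prod_type, e3, ← e1, add_assoc]
            congr 1
            congr 1
            exact Finset.sum_comm
    refine ⟨lam, hnn, ?_, ?_, ?_⟩
    · intro j
      refine Fin.cases ?_ ?_ j
      · have hz : ∀ b, Gv (fun k => g k 0) b = 0 := by
          intro b
          cases b with
          | inl k => simp only [hGv, Sum.elim_inl]; split_ifs with hk; exacts [hk, rfl]
          | inr pq =>
            simp only [hGv, Sum.elim_inr]; split_ifs with hk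
            · ring
            · rfl
        rw [show (∑ k, lam k * g k 0) = ∑ b, Λ b * Gv (fun k => g k 0) b from comb _]
        exact Finset.sum_eq_zero fun b _ => by rw [hz b, mul_zero]
      · intro j
        rw [show (∑ k, lam k * g k (Fin.succ j)) = ∑ b, Λ b * Gv (fun k => g k (Fin.succ j)) b
          from comb _]
        have := hΛg j
        simp only [hG] at this
        exact this
    · rw [comb h]
      have := hΛh
      simp only [hH] at this
      exact this
    · rcases hΛd with hpos | ⟨b, hSTb, hΛb⟩
      · left
        rw [comb h]
        have := hpos
        simp only [hH] at this
        exact this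
      · right
        cases b with
        | inl k =>
          have hck : c k = 0 ∧ st k = true := by
            simp only [hST, Sum.elim_inl] at hSTb
            by_cases hk : c k = 0
            · rw [if_pos hk] at hSTb; exact ⟨hk, hSTb⟩
            · rw [if_neg hk] at hSTb; exact absurd hSTb (by simp)
          refine ⟨k, hck.2, ?_⟩
          have h2 : (0:ℝ) ≤ ∑ q, if 0 < c k ∧ c q < 0 then (-(c q)) * Λ (Sum.inr (k,q)) else 0 :=
            Finset.sum_nonneg fun q _ => t2nn k q
          have h3 : (0:ℝ) ≤ ∑ p, if 0 < c p ∧ c k < 0 then c p * Λ (Sum.inr (p,k)) else 0 :=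
            Finset.sum_nonneg fun p _ => t3nn p k
          have h1 : (if c k = 0 then Λ (Sum.inl k) else 0) = Λ (Sum.inl k) := if_pos hck.1
          simp only [hlam]
          rw [h1]
          linarith
        | inr pq =>
          obtain ⟨p, q⟩ := pq
          have hcond : (0 < c p ∧ c q < 0) ∧ (st p || st q) = true := by
            simp only [hST, Sum.elim_inr] at hSTb
            by_cases hk : 0 < c p ∧ c q < 0
            · rw [if_pos hk] at hSTb; exact ⟨hk, hSTb⟩
            · rw [if_neg hk] at hSTb; exact absurd hSTb (by simp)
          rcases Bool.or_eq_true_iff.1 hcond.2 with hsp | hsq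
          · refine ⟨p, hsp, ?_⟩
            have hterm : (if 0 < c p ∧ c q < 0 then (-(c q)) * Λ (Sum.inr (p, q)) else 0)
                = (-(c q)) * Λ (Sum.inr (p, q)) := if_pos hcond.1
            have hposterm : 0 < (-(c q)) * Λ (Sum.inr (p, q)) :=
              mul_pos (by linarith [hcond.1.2]) hΛb
            have hle : (if 0 < c p ∧ c q < 0 then (-(c q)) * Λ (Sum.inr (p, q)) else 0)
                ≤ ∑ q', if 0 < c p ∧ c q' < 0 then (-(c q')) * Λ (Sum.inr (p, q')) else 0 :=
              Finset.single_le_sum (fun q' _ => t2nn p q') (Finset.mem_univ q)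
            have h3 : (0:ℝ) ≤ ∑ p', if 0 < c p' ∧ c p < 0 then c p' * Λ (Sum.inr (p',p)) else 0 :=
              Finset.sum_nonneg fun p' _ => t3nn p' p
            simp only [hlam]
            rw [hterm] at hle
            linarith [t1nn p]
          · refine ⟨q, hsq, ?_⟩
            have hterm : (if 0 < c p ∧ c q < 0 then c p * Λ (Sum.inr (p, q)) else 0)
                = c p * Λ (Sum.inr (p, q)) := if_pos hcond.1
            have hposterm : 0 < c p * Λ (Sum.inr (p, q)) :=
              mul_pos (by linarith [hcond.1.1]) hΛb
            have hle : (if 0 < c p ∧ c q < 0 then c p * Λ (Sum.inr (p, q)) else 0)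
                ≤ ∑ p', if 0 < c p' ∧ c q < 0 then c p' * Λ (Sum.inr (p', q)) else 0 :=
              Finset.single_le_sum (fun p' _ => t3nn p' q) (Finset.mem_univ p)
            have h2 : (0:ℝ) ≤ ∑ q', if 0 < c q ∧ c q' < 0 then (-(c q')) * Λ (Sum.inr (q,q')) else 0 :=
              Finset.sum_nonneg fun q' _ => t2nn q q'
            simp only [hlam]
            rw [hterm] at hle
            linarith [t1nn q]


theorem affine_comb {E : Type*} [AddCommGroup E] [Module ℝ E] {X : Set E} (hX : Convex ℝ X)
    (w : E → ℝ)
    (hw : ∀ x ∈ X, ∀ y ∈ X, ∀ l : ℝ, 0 ≤ l → l ≤ 1 →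
      w (l • x + (1 - l) • y) = l * w x + (1 - l) * w y)
    {ι : Type*} (s : Finset ι) (z : ι → E) (μ : ι → ℝ)
    (hz : ∀ i ∈ s, z i ∈ X) (hμ : ∀ i ∈ s, 0 ≤ μ i) (hsum : ∑ i ∈ s, μ i = 1) :
    w (∑ i ∈ s, μ i • z i) = ∑ i ∈ s, μ i * w (z i) := by
  classical
  induction s using Finset.induction_on generalizing μ with
  | empty => simp at hsum
  | @insert a s hnot ih =>
    have hza : z a ∈ X := hz a (Finset.mem_insert_self a s)
    have hzs : ∀ i ∈ s, z i ∈ X := fun i hi => hz i (Finset.mem_insert_of_mem hi)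
    have hμs : ∀ i ∈ s, 0 ≤ μ i := fun i hi => hμ i (Finset.mem_insert_of_mem hi)
    rw [Finset.sum_insert hnot] at hsum
    by_cases h1 : μ a = 1
    · have hrest : ∑ i ∈ s, μ i = 0 := by linarith
      have hzero : ∀ i ∈ s, μ i = 0 :=
        (Finset.sum_eq_zero_iff_of_nonneg hμs).1 hrest
      rw [Finset.sum_insert hnot, Finset.sum_insert hnot,
        Finset.sum_eq_zero (fun i hi => by rw [hzero i hi, zero_smul]),
        Finset.sum_eq_zero (fun i hi => by rw [hzero i hi, zero_mul]),
        add_zero, add_zero, h1, one_smul, one_mul]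
    · have hl0 : 0 ≤ μ a := hμ a (Finset.mem_insert_self a s)
      have hrest : ∑ i ∈ s, μ i = 1 - μ a := by linarith
      have hl1 : μ a ≤ 1 := by
        have : 0 ≤ ∑ i ∈ s, μ i := Finset.sum_nonneg hμs
        linarith
      have hpos : 0 < 1 - μ a := lt_of_le_of_ne (by linarith) (by
        intro hcontra; exact h1 (by linarith))
      have hν0 : ∀ i ∈ s, 0 ≤ μ i / (1 - μ a) := fun i hi =>
        div_nonneg (hμs i hi) hpos.le
      have hνsum : ∑ i ∈ s, μ i / (1 - μ a) = 1 := by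
        rw [← Finset.sum_div, hrest, div_self hpos.ne']
      have hy : (∑ i ∈ s, (μ i / (1 - μ a)) • z i) ∈ X :=
        hX.sum_mem hν0 hνsum hzs
      have hrw : (1 - μ a) • (∑ i ∈ s, (μ i / (1 - μ a)) • z i) = ∑ i ∈ s, μ i • z i := by
        rw [Finset.smul_sum]
        exact Finset.sum_congr rfl fun i _ => by
          rw [smul_smul, mul_div_cancel₀ _ hpos.ne']
      have key := hw (z a) hza _ hy (μ a) hl0 hl1
      rw [hrw] at key
      rw [Finset.sum_insert hnot, Finset.sum_insert hnot, key,
        ih _ hzs hν0 hνsum, Finset.mul_sum]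
      congr 1
      exact Finset.sum_congr rfl fun i _ => by
        rw [← mul_assoc, mul_div_cancel₀ _ hpos.ne']

/-- Theorem: aggregation with `ε`-Strong Pareto, polyhedral case.
Let `ε ≥ 0` and let `(X, u₀, {u₁,…,u_N})` be a setting with vN-M utilities where `X`
is the convex hull of finitely many points of the ambient real vector space.  Then
`ε`-Strong Pareto holds iff there is a utilitarian aggregator `w = Σᵢ aᵢ uᵢ + b` with
all `aᵢ > 0` and `‖u₀ − w‖∞ ≤ ε/2`. -/
theorem stmt11 {E : Type*} [AddCommGroup E] [Module ℝ E]
    {N : ℕ} (hN : 1 ≤ N) {ε : ℝ} (hε : 0 ≤ ε)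
    (X : Set E) (hXne : X.Nonempty) (hXconv : Convex ℝ X)
    (T : Finset E) (hXT : X = convexHull ℝ (T : Set E))
    (u₀ : E → ℝ) (u : Fin N → E → ℝ)
    (haff₀ : ∀ x ∈ X, ∀ y ∈ X, ∀ l : ℝ, 0 ≤ l → l ≤ 1 →
      u₀ (l • x + (1 - l) • y) = l * u₀ x + (1 - l) * u₀ y)
    (haff : ∀ i : Fin N, ∀ x ∈ X, ∀ y ∈ X, ∀ l : ℝ, 0 ≤ l → l ≤ 1 →
      u i (l • x + (1 - l) • y) = l * u i x + (1 - l) * u i y) :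
    (∀ x ∈ X, ∀ y ∈ X, (∀ i, u i y ≤ u i x) →
        (u₀ y - ε ≤ u₀ x ∧ ((∃ i, u i y < u i x) → u₀ y - ε < u₀ x))) ↔
      (∃ (a : Fin N → ℝ) (b : ℝ), (∀ i, 0 < a i) ∧
        ∀ x ∈ X, |u₀ x - ((∑ i, a i * u i x) + b)| ≤ ε / 2) := by
  classical
  constructor
  · intro pareto
    have hTne : T.Nonempty := by
      rcases hXne with ⟨x, hx⟩
      by_contra hT
      rw [Finset.not_nonempty_iff_eq_empty] at hT
      rw [hXT, hT] at hx
      simp at hx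
    have hTX : ∀ t ∈ T, t ∈ X := fun t ht => by
      rw [hXT]; exact subset_convexHull ℝ (T : Set E) ht
    set gg : (({t // t ∈ T} × {t // t ∈ T}) ⊕ Fin N) → Fin N → ℝ := Sum.elim
        (fun p j => u j p.1.1 - u j p.2.1)
        (fun i j => if j = i then 1 else 0) with hgg
    set hh : (({t // t ∈ T} × {t // t ∈ T}) ⊕ Fin N) → ℝ :=
      Sum.elim (fun p => u₀ p.1.1 - u₀ p.2.1 - ε) (fun _ => 0) with hhh
    set ss : (({t // t ∈ T} × {t // t ∈ T}) ⊕ Fin N) → Bool :=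
      Sum.elim (fun _ => false) (fun _ => true) with hss
    by_cases hfeas : ∃ a : Fin N → ℝ, ∀ k, if ss k then hh k < ∑ j, gg k j * a j
        else hh k ≤ ∑ j, gg k j * a j
    · -- feasible: build the aggregator
      obtain ⟨a, ha⟩ := hfeas
      have hapos : ∀ i, 0 < a i := by
        intro i
        have h1 := ha (Sum.inr i)
        simp only [hss, hgg, hhh, Sum.elim_inr, if_true] at h1
        have h2 : (∑ j, (if j = i then (1:ℝ) else 0) * a j) = a i := by
          simp [ite_mul]
        rw [h2] at h1
        exact h1
      have hpair : ∀ s ∈ T, ∀ t ∈ T,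
          u₀ s - u₀ t - ε ≤ ∑ j, (u j s - u j t) * a j := by
        intro s hs t ht
        have h1 := ha (Sum.inl (⟨s, hs⟩, ⟨t, ht⟩))
        simpa [hss, hgg, hhh] using h1
      set f : E → ℝ := fun x => u₀ x - ∑ i, a i * u i x with hf
      have hfaff : ∀ x ∈ X, ∀ y ∈ X, ∀ l : ℝ, 0 ≤ l → l ≤ 1 →
          f (l • x + (1 - l) • y) = l * f x + (1 - l) * f y := by
        intro x hx y hy l hl0 hl1
        simp only [hf]
        rw [haff₀ x hx y hy l hl0 hl1,
          Finset.sum_congr rfl (fun i _ => by rw [haff i x hx y hy l hl0 hl1])]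
        simp only [mul_add, Finset.sum_add_distrib]
        have e1 : (∑ i, a i * (l * u i x)) = l * ∑ i, a i * u i x := by
          rw [Finset.mul_sum]; exact Finset.sum_congr rfl fun i _ => by ring
        have e2 : (∑ i, a i * ((1-l) * u i y)) = (1-l) * ∑ i, a i * u i y := by
          rw [Finset.mul_sum]; exact Finset.sum_congr rfl fun i _ => by ring
        rw [e1, e2]
        ring
      obtain ⟨tM, htM, htMmax⟩ := T.exists_max_image f hTne
      obtain ⟨tm, htm, htmmin⟩ := T.exists_min_image f hTne
      have hsplit : ∀ s t : E, (∑ j, (u j s - u j t) * a j)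
          = (∑ i, a i * u i s) - (∑ i, a i * u i t) := by
        intro s t
        rw [← Finset.sum_sub_distrib]
        exact Finset.sum_congr rfl fun i _ => by ring
      have hMm : f tM - f tm ≤ ε := by
        have h2 := hpair tM htM tm htm
        rw [hsplit tM tm] at h2
        simp only [hf]
        linarith
      refine ⟨a, (f tM + f tm)/2, hapos, ?_⟩
      intro x hx
      have hxr : x ∈ convexHull ℝ (T : Set E) := by rw [← hXT]; exact hx
      rw [Finset.convexHull_eq] at hxr
      obtain ⟨μ, hμ0, hμ1, hxc⟩ := hxr
      have hxeq : x = ∑ t ∈ T, μ t • t := by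
        rw [← hxc, Finset.centerMass_eq_of_sum_1 _ _ hμ1]
        rfl
      have hfx : f x = ∑ t ∈ T, μ t * f t := by
        rw [hxeq]
        exact affine_comb hXconv f hfaff T id μ hTX hμ0 hμ1
      have hup : f x ≤ f tM := by
        rw [hfx]
        calc (∑ t ∈ T, μ t * f t) ≤ ∑ t ∈ T, μ t * f tM :=
              Finset.sum_le_sum fun t ht =>
                mul_le_mul_of_nonneg_left (htMmax t ht) (hμ0 t ht)
          _ = f tM := by rw [← Finset.sum_mul, hμ1, one_mul]
      have hlo : f tm ≤ f x := by
        rw [hfx]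
        calc f tm = ∑ t ∈ T, μ t * f tm := by rw [← Finset.sum_mul, hμ1, one_mul]
          _ ≤ ∑ t ∈ T, μ t * f t :=
              Finset.sum_le_sum fun t ht =>
                mul_le_mul_of_nonneg_left (htmmin t ht) (hμ0 t ht)
      have hgoal : u₀ x - ((∑ i, a i * u i x) + (f tM + f tm)/2)
          = f x - (f tM + f tm)/2 := by simp only [hf]; ring
      rw [hgoal, abs_le]
      clear_value f
      constructor
      · linarith
      · linarith
    · -- infeasible: contradict Pareto
      exfalso
      obtain ⟨lam, hl0, hlg, hlh, hld⟩ := motzkin N _ gg hh ss hfeas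
      have hLnn : (0:ℝ) ≤ ∑ p : {t // t ∈ T} × {t // t ∈ T}, lam (Sum.inl p) :=
        Finset.sum_nonneg fun p _ => hl0 (Sum.inl p)
      set L : ℝ := ∑ p : {t // t ∈ T} × {t // t ∈ T}, lam (Sum.inl p) with hL
      have hcoord : ∀ j : Fin N,
          (∑ p : {t // t ∈ T} × {t // t ∈ T}, lam (Sum.inl p) * (u j p.1.1 - u j p.2.1))
            + lam (Sum.inr j) = 0 := by
        intro j
        have h1 := hlg j
        rw [Fintype.sum_sum_type] at h1
        have h2 : (∑ i : Fin N, lam (Sum.inr i) * gg (Sum.inr i) j) = lam (Sum.inr j) := by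
          simp only [hgg, Sum.elim_inr]
          rw [Finset.sum_congr rfl (fun i _ => mul_ite (j = i) (lam (Sum.inr i)) 1 0)]
          simp
        rw [h2] at h1
        simpa [hgg] using h1
      have hsumh : (∑ k, lam k * hh k)
          = ∑ p : {t // t ∈ T} × {t // t ∈ T}, lam (Sum.inl p) * (u₀ p.1.1 - u₀ p.2.1 - ε) := by
        rw [Fintype.sum_sum_type]
        simp [hhh]
      rcases eq_or_lt_of_le hLnn with hL0 | hLpos
      · -- L = 0: all pair multipliers vanish
        have hall : ∀ p : {t // t ∈ T} × {t // t ∈ T}, lam (Sum.inl p) = 0 := by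
          have := (Finset.sum_eq_zero_iff_of_nonneg
            (fun p _ => hl0 (Sum.inl (p : {t // t ∈ T} × {t // t ∈ T})))).1 hL0.symm
          exact fun p => this p (Finset.mem_univ p)
        have hHz : (∑ k, lam k * hh k) = 0 := by
          rw [hsumh]
          exact Finset.sum_eq_zero fun p _ => by rw [hall p, zero_mul]
        rcases hld with h1 | ⟨k, hk, hkpos⟩
        · rw [hHz] at h1; exact lt_irrefl 0 h1
        · cases k with
          | inl p => simp [hss] at hk
          | inr i =>
            have := hcoord i
            rw [Finset.sum_eq_zero (fun p _ => by rw [hall p, zero_mul]), zero_add] at this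
            rw [this] at hkpos
            exact lt_irrefl 0 hkpos
      · -- L > 0: build the dominating mixture
        set ν : {t // t ∈ T} × {t // t ∈ T} → ℝ := fun p => lam (Sum.inl p) / L with hν
        have hν0 : ∀ p ∈ Finset.univ, 0 ≤ ν p := fun p _ =>
          div_nonneg (hl0 (Sum.inl p)) hLpos.le
        have hνsum : (∑ p, ν p) = 1 := by
          simp only [hν]
          rw [← Finset.sum_div, ← hL, div_self hLpos.ne']
        set x : E := ∑ p : {t // t ∈ T} × {t // t ∈ T}, ν p • (p.1.1 : E) with hxdef
        set y : E := ∑ p : {t // t ∈ T} × {t // t ∈ T}, ν p • (p.2.1 : E) with hydef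
        have hxX : x ∈ X := hXconv.sum_mem hν0 hνsum (fun p _ => hTX p.1.1 p.1.2)
        have hyX : y ∈ X := hXconv.sum_mem hν0 hνsum (fun p _ => hTX p.2.1 p.2.2)
        have hux : ∀ j : Fin N, u j x = ∑ p, ν p * u j p.1.1 := fun j =>
          affine_comb hXconv (u j) (haff j) Finset.univ _ ν
            (fun p _ => hTX p.1.1 p.1.2) hν0 hνsum
        have huy : ∀ j : Fin N, u j y = ∑ p, ν p * u j p.2.1 := fun j =>
          affine_comb hXconv (u j) (haff j) Finset.univ _ ν
            (fun p _ => hTX p.2.1 p.2.2) hν0 hνsum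
        have hu0x : u₀ x = ∑ p, ν p * u₀ p.1.1 :=
          affine_comb hXconv u₀ haff₀ Finset.univ _ ν
            (fun p _ => hTX p.1.1 p.1.2) hν0 hνsum
        have hu0y : u₀ y = ∑ p, ν p * u₀ p.2.1 :=
          affine_comb hXconv u₀ haff₀ Finset.univ _ ν
            (fun p _ => hTX p.2.1 p.2.2) hν0 hνsum
        have hdiff : ∀ j : Fin N, u j x - u j y = -(lam (Sum.inr j)) / L := by
          intro j
          rw [hux j, huy j, ← Finset.sum_sub_distrib]
          have e1 : (∑ p, (ν p * u j p.1.1 - ν p * u j p.2.1))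
              = (∑ p, lam (Sum.inl p) * (u j p.1.1 - u j p.2.1)) / L := by
            rw [Finset.sum_div]
            exact Finset.sum_congr rfl fun p _ => by
              simp only [hν]; field_simp
          rw [e1]
          have := hcoord j
          have e2 : (∑ p, lam (Sum.inl p) * (u j p.1.1 - u j p.2.1)) = -(lam (Sum.inr j)) := by
            linarith
          rw [e2]
        have hdom : ∀ j : Fin N, u j x ≤ u j y := by
          intro j
          have h1 := hdiff j
          have h2 : -(lam (Sum.inr j)) / L ≤ 0 :=
            div_nonpos_of_nonpos_of_nonneg (by linarith [hl0 (Sum.inr j)]) hLpos.le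
          linarith
        have hu0diff : u₀ x - u₀ y = (∑ k, lam k * hh k) / L + ε := by
          rw [hu0x, hu0y, ← Finset.sum_sub_distrib, hsumh]
          have e1 : (∑ p, (ν p * u₀ p.1.1 - ν p * u₀ p.2.1))
              = (∑ p, lam (Sum.inl p) * (u₀ p.1.1 - u₀ p.2.1 - ε)) / L + ε := by
            rw [Finset.sum_div]
            have e2 : ∀ p : {t // t ∈ T} × {t // t ∈ T},
                lam (Sum.inl p) * (u₀ p.1.1 - u₀ p.2.1 - ε) / L
                = ν p * u₀ p.1.1 - ν p * u₀ p.2.1 - ε * ν p := by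
              intro p; simp only [hν]; field_simp
            have e3 : (∑ p : {t // t ∈ T} × {t // t ∈ T}, ε * ν p) = ε := by
              rw [← Finset.mul_sum, hνsum, mul_one]
            have e4 : (∑ p : {t // t ∈ T} × {t // t ∈ T},
                (ν p * u₀ p.1.1 - ν p * u₀ p.2.1 - ε * ν p))
                = (∑ p : {t // t ∈ T} × {t // t ∈ T},
                    (ν p * u₀ p.1.1 - ν p * u₀ p.2.1)) - ε := by
              rw [Finset.sum_sub_distrib, e3]
            rw [Finset.sum_congr rfl fun p _ => e2 p, e4]
            ring
          rw [e1]
        have hpar := pareto y hyX x hxX hdom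
        have hHnonpos : (∑ k, lam k * hh k) ≤ 0 := by
          by_contra hcon
          push_neg at hcon
          have h2 : 0 < (∑ k, lam k * hh k) / L := div_pos hcon hLpos
          have h3 := hpar.1
          linarith [hu0diff]
        have hH0 : (∑ k, lam k * hh k) = 0 := le_antisymm hHnonpos hlh
        rcases hld with h1 | ⟨k, hk, hkpos⟩
        · rw [hH0] at h1; exact lt_irrefl 0 h1
        · cases k with
          | inl p => simp [hss] at hk
          | inr i =>
            have hneg : -(lam (Sum.inr i)) / L < 0 :=
              div_neg_of_neg_of_pos (by linarith) hLpos
            have hstrict : u i x < u i y := by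
              have := hdiff i
              linarith
            have h4 := hpar.2 ⟨i, hstrict⟩
            rw [hH0] at hu0diff
            simp only [zero_div, zero_add] at hu0diff
            linarith
  · rintro ⟨a, b, hapos, hbound⟩ x hx y hy hdom
    have hw : (∑ i, a i * u i y) ≤ ∑ i, a i * u i x :=
      Finset.sum_le_sum fun i _ => mul_le_mul_of_nonneg_left (hdom i) (hapos i).le
    have h1 := hbound x hx
    have h2 := hbound y hy
    rw [abs_le] at h1 h2
    constructor
    · linarith [h1.1, h1.2, h2.1, h2.2]
    · rintro ⟨i, hi⟩
      have hwlt : (∑ i, a i * u i y) < ∑ i, a i * u i x :=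
        Finset.sum_lt_sum (fun j _ => mul_le_mul_of_nonneg_left (hdom j) (hapos j).le)
          ⟨i, Finset.mem_univ i, mul_lt_mul_of_pos_left hi (hapos i)⟩
      linarith [h1.1, h1.2, h2.1, h2.2]
end

section
/- Let ε ∈ [0,1] and let P₀, P₁, …, P_N be nonatomic probability measures on a measurable space (S, Σ_S). Let Σ_u = {E ∈ Σ_S : P₀(E) = P_i(E) for all i = 1,…,N}, and suppose that for all E ∈ Σ_S and F ∈ Σ_u, P_i(E) ≥ P_i(F) for all i = 1,…,N implies P₀(E) ≥ P₀(F) − ε/2. Then for every E ∈ Σ_S: P₀(E) ≥ min_{1≤i≤N} P_i(E) − ε/2. -/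
open MeasureTheory

/-- A measure is nonatomic when every set of positive measure has a measurable subset
of strictly smaller positive measure. -/
def Nonatomic {S : Type*} [MeasurableSpace S] (μ : Measure S) : Prop :=
  ∀ E : Set S, MeasurableSet E → 0 < μ E →
    ∃ F : Set S, F ⊆ E ∧ MeasurableSet F ∧ 0 < μ F ∧ μ F < μ E

open Set
open scoped InnerProductSpace ENNReal

section Helpers
variable {S : Type*} [MeasurableSpace S]

lemma measure_fin_sum_apply {M : ℕ} (Q : Fin M → Measure S) (A : Set S) :
    (∑ j, Q j) A = ∑ j, Q j A := by
  simp [Measure.coe_finset_sum, Finset.sum_apply]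

lemma nonatomic_finsum {M : ℕ} (Q : Fin M → Measure S)
    [∀ j, IsProbabilityMeasure (Q j)] (hna : ∀ j, Nonatomic (Q j)) :
    Nonatomic (∑ j, Q j) := by
  haveI : IsFiniteMeasure (∑ j, Q j) := by
    constructor
    rw [measure_fin_sum_apply]
    exact ENNReal.sum_lt_top.mpr fun j _ => measure_lt_top _ _
  set ν : Measure S := ∑ j, Q j with hν
  intro E hE hEpos
  by_contra hcon
  push_neg at hcon
  -- so every measurable F ⊆ E has ν F = 0 or ν F = ν E
  have key : ∀ F : Set S, F ⊆ E → MeasurableSet F → ν F = 0 ∨ ν F = ν E := by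
    intro F hFE hF
    rcases eq_or_lt_of_le ((show 0 ≤ ν F from zero_le)) with h0 | h0
    · exact Or.inl h0.symm
    · right
      have := hcon F hFE hF h0
      exact le_antisymm (measure_mono hFE) this
  obtain ⟨j, hj⟩ : ∃ j, 0 < Q j E := by
    by_contra hall
    push_neg at hall
    have : ν E = 0 := by
      rw [measure_fin_sum_apply]
      exact Finset.sum_eq_zero fun j _ => le_antisymm (hall j) (zero_le)
    exact hEpos.ne' this
  obtain ⟨F, hFE, hF, hFpos, hFlt⟩ := hna j E hE hj
  have hνF : 0 < ν F := lt_of_lt_of_le hFpos (by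
    rw [measure_fin_sum_apply]
    exact Finset.single_le_sum (f := fun i => Q i F) (fun i _ => zero_le) (Finset.mem_univ j))
  rcases key F hFE hF with h | h
  · exact hνF.ne' h
  · -- ν (E \ F) = 0, so Q j (E \ F) = 0, so Q j F = Q j E
    have hdiff : ν (E \ F) = 0 := by
      have := measure_diff hFE hF.nullMeasurableSet (measure_ne_top ν F)
      rw [this, h, tsub_self]
    have hQdiff : Q j (E \ F) = 0 := by
      have : Q j (E \ F) ≤ ν (E \ F) := by
        rw [measure_fin_sum_apply]
        exact Finset.single_le_sum (f := fun i => Q i (E \ F)) (fun i _ => zero_le) (Finset.mem_univ j)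
      exact le_antisymm (hdiff ▸ this) (zero_le)
    have : Q j E ≤ Q j F := by
      calc Q j E ≤ Q j (F ∪ (E \ F)) := measure_mono (fun x hx => by
            by_cases h : x ∈ F
            · exact Or.inl h
            · exact Or.inr ⟨hx, h⟩)
        _ ≤ Q j F + Q j (E \ F) := measure_union_le _ _
        _ = Q j F := by rw [hQdiff, add_zero]
    exact absurd this (not_le.mpr hFlt)

/-- split a positive set into n+1 disjoint positive measurable pieces -/
lemma split_pieces {ν : Measure S} [IsFiniteMeasure ν] (hna : Nonatomic ν) :
    ∀ (n : ℕ) (E : Set S), MeasurableSet E → 0 < ν E →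
    ∃ B : Fin (n + 1) → Set S,
      (∀ k, MeasurableSet (B k) ∧ B k ⊆ E ∧ 0 < ν (B k)) ∧
      Pairwise (Function.onFun Disjoint B) := by
  intro n
  induction n with
  | zero =>
    intro E hE hpos
    exact ⟨fun _ => E, fun k => ⟨hE, subset_rfl, hpos⟩, by
      intro a b hab; exact absurd (Subsingleton.elim (α := Fin 1) a b) hab⟩
  | succ n ih =>
    intro E hE hpos
    obtain ⟨F, hFE, hF, hFpos, hFlt⟩ := hna E hE hpos
    have hdiffpos : 0 < ν (E \ F) := by
      have := measure_diff hFE hF.nullMeasurableSet (measure_ne_top ν F)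
      rw [this]
      exact tsub_pos_of_lt hFlt
    obtain ⟨B, hB, hBdisj⟩ := ih (E \ F) (hE.diff hF) hdiffpos
    refine ⟨Fin.cons F B, ?_, ?_⟩
    · intro k
      refine Fin.cases ?_ ?_ k
      · exact ⟨hF, hFE, hFpos⟩
      · intro i
        simp only [Fin.cons_succ]
        exact ⟨(hB i).1, (hB i).2.1.trans diff_subset, (hB i).2.2⟩
    · intro a b hab
      induction a using Fin.cases with
      | zero =>
        induction b using Fin.cases with
        | zero => exact absurd rfl hab
        | succ i =>
          simp only [Function.onFun, Fin.cons_zero, Fin.cons_succ]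
          exact Set.disjoint_of_subset_right (hB i).2.1 disjoint_sdiff_right
      | succ i =>
        induction b using Fin.cases with
        | zero =>
          simp only [Function.onFun, Fin.cons_zero, Fin.cons_succ]
          exact Set.disjoint_of_subset_left (hB i).2.1 disjoint_sdiff_left
        | succ i' =>
          simp only [Function.onFun, Fin.cons_succ]
          exact hBdisj (fun h => hab (congrArg Fin.succ h))

lemma exists_kernel_vec {M : ℕ} (A : Matrix (Fin M) (Fin (M + 1)) ℝ) :
    ∃ c : Fin (M + 1) → ℝ, c ≠ 0 ∧ A.mulVec c = 0 := by
  have hni : ¬ Function.Injective A.mulVecLin := by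
    intro hinj
    have := LinearMap.finrank_le_finrank_of_injective hinj
    simp [Module.finrank_pi] at this
  rw [injective_iff_map_eq_zero] at hni
  push_neg at hni
  obtain ⟨c, hc0, hcne⟩ := hni
  exact ⟨c, hcne, hc0⟩

set_option maxHeartbeats 2000000 in
theorem diag_lyapunov {M : ℕ} (Q : Fin (M + 1) → Measure S)
    [hprob : ∀ j, IsProbabilityMeasure (Q j)] (hna : ∀ j, Nonatomic (Q j))
    {t : ℝ} (ht0 : 0 ≤ t) (ht1 : t ≤ 1) :
    ∃ F : Set S, MeasurableSet F ∧ ∀ j, (Q j F).toReal = t := by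
  classical
  set ν : Measure S := ∑ j, Q j with hνdef
  haveI hνfin : IsFiniteMeasure ν := by
    constructor
    rw [measure_fin_sum_apply]
    exact ENNReal.sum_lt_top.mpr fun j _ => measure_lt_top _ _
  have hνna : Nonatomic ν := nonatomic_finsum Q hna
  have hQle : ∀ j, Q j ≤ ν := by
    intro j
    refine Measure.le_iff.mpr fun A hA => ?_
    rw [measure_fin_sum_apply]
    exact Finset.single_le_sum (f := fun i => Q i A) (fun i _ => zero_le) (Finset.mem_univ j)
  have hac : ∀ j, Q j ≪ ν := fun j => Measure.absolutelyContinuous_of_le (hQle j)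
  -- densities
  set f : Fin (M + 1) → S → ℝ := fun j x => ((Q j).rnDeriv ν x).toReal with hfdef
  have hfmeas : ∀ j, Measurable (f j) := fun j =>
    (Measure.measurable_rnDeriv _ _).ennreal_toReal
  have hf01 : ∀ j, ∀ᵐ x ∂ν, 0 ≤ f j x ∧ f j x ≤ 1 := by
    intro j
    filter_upwards [Measure.rnDeriv_le_one_of_le (hQle j)] with x hx
    exact ⟨ENNReal.toReal_nonneg, by
      calc ((Q j).rnDeriv ν x).toReal ≤ (1 : ℝ≥0∞).toReal :=
        ENNReal.toReal_mono ENNReal.one_ne_top hx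
      _ = 1 := by simp⟩
  have hfL2 : ∀ j, MemLp (f j) 2 ν := by
    intro j
    refine MemLp.of_bound (hfmeas j).aestronglyMeasurable 1 ?_
    filter_upwards [hf01 j] with x hx
    rw [Real.norm_eq_abs, abs_of_nonneg hx.1]
    exact hx.2
  set fL : Fin (M + 1) → Lp ℝ 2 ν := fun j => (hfL2 j).toLp (f j) with hfLdef
  have hfLcoe : ∀ j, ⇑(fL j) =ᵐ[ν] f j := fun j => (hfL2 j).coeFn_toLp
  have hsetint : ∀ j (A : Set S), MeasurableSet A →
      ∫ x in A, f j x ∂ν = (Q j A).toReal := fun j A hA =>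
    Measure.setIntegral_toReal_rnDeriv (hac j) A
  -- the indicator test vectors
  set ind : ∀ A : Set S, MeasurableSet A → Lp ℝ 2 ν := fun A hA =>
    indicatorConstLp 2 hA (measure_ne_top ν A) (1 : ℝ) with hinddef
  have hind_inner : ∀ (g : Lp ℝ 2 ν) (A : Set S) (hA : MeasurableSet A),
      ⟪g, ind A hA⟫_ℝ = ∫ x in A, g x ∂ν := by
    intro g A hA
    rw [real_inner_comm]
    exact L2.inner_indicatorConstLp_one hA (measure_ne_top ν A) g
  have hinner_f : ∀ (g : Lp ℝ 2 ν) j, ⟪g, fL j⟫_ℝ = ∫ x, g x * f j x ∂ν := by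
    intro g j
    rw [MeasureTheory.L2.inner_def]
    refine integral_congr_ae ?_
    filter_upwards [hfLcoe j] with x hx
    rw [hx]
    simp [RCLike.inner_apply]
    ring
  -- integrability facts
  have hgint : ∀ g : Lp ℝ 2 ν, Integrable (⇑g) ν := fun g =>
    MemLp.integrable one_le_two (Lp.memLp g)
  -- the convex set K
  set K : Set (Lp ℝ 2 ν) :=
    {g : Lp ℝ 2 ν | (∀ᵐ x ∂ν, 0 ≤ g x ∧ g x ≤ 1) ∧ ∀ j, ⟪g, fL j⟫_ℝ = t}
    with hKdef
  have hKne : K.Nonempty := by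
    refine ⟨(memLp_const t).toLp (fun _ => t), ?_, ?_⟩
    · filter_upwards [(memLp_const (p := 2) (μ := ν) t).coeFn_toLp] with x hx
      rw [hx]; exact ⟨ht0, ht1⟩
    · intro j
      rw [hinner_f]
      have : ∫ x, ((memLp_const (p := 2) (μ := ν) t).toLp (fun _ => t)) x * f j x ∂ν
          = ∫ x, t * f j x ∂ν := by
        refine integral_congr_ae ?_
        filter_upwards [(memLp_const (p := 2) (μ := ν) t).coeFn_toLp] with x hx
        rw [hx]
      rw [this, integral_const_mul, ← setIntegral_univ,
        hsetint j univ MeasurableSet.univ]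
      simp [measure_univ]
  have hKconv : Convex ℝ K := by
    intro g₁ hg₁ g₂ hg₂ a b ha hb hab
    constructor
    · filter_upwards [hg₁.1, hg₂.1, Lp.coeFn_add (a • g₁) (b • g₂),
        Lp.coeFn_smul a g₁, Lp.coeFn_smul b g₂] with x h1 h2 h3 h4 h5
      rw [h3]
      simp only [Pi.add_apply, h4, h5, Pi.smul_apply, smul_eq_mul]
      constructor
      · have := mul_nonneg ha h1.1
        have := mul_nonneg hb h2.1
        linarith
      · have h1' := mul_le_mul_of_nonneg_left h1.2 ha
        have h2' := mul_le_mul_of_nonneg_left h2.2 hb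
        nlinarith
    · intro j
      rw [inner_add_left, real_inner_smul_left, real_inner_smul_left,
        hg₁.2 j, hg₂.2 j, ← add_mul, hab, one_mul]
  -- recovering pointwise bounds from integral conditions
  have hrecover : ∀ g : Lp ℝ 2 ν,
      (∀ A : Set S, MeasurableSet A →
        0 ≤ ∫ x in A, g x ∂ν ∧ ∫ x in A, g x ∂ν ≤ (ν A).toReal) →
      (∀ᵐ x ∂ν, 0 ≤ g x ∧ g x ≤ 1) := by
    intro g hcond
    have hlow : 0 ≤ᵐ[ν] ⇑g :=
      ae_nonneg_of_forall_setIntegral_nonneg (hgint g)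
        (fun A hA _ => (hcond A hA).1)
    have hup : 0 ≤ᵐ[ν] (fun x => 1 - g x) := by
      refine ae_nonneg_of_forall_setIntegral_nonneg
        ((integrable_const 1).sub (hgint g)) (fun A hA _ => ?_)
      rw [integral_sub (integrable_const (1:ℝ))
        ((hgint g).integrableOn), setIntegral_const, smul_eq_mul, mul_one]
      exact sub_nonneg.mpr (hcond A hA).2
    filter_upwards [hlow, hup] with x h1 h2
    exact ⟨h1, by simpa using h2⟩
  -- the image of K in the weak dual
  set Φ := InnerProductSpace.toDual ℝ (Lp ℝ 2 ν) with hΦdef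
  set J : Set (WeakDual ℝ (Lp ℝ 2 ν)) := (fun g => (Φ g : WeakDual ℝ (Lp ℝ 2 ν))) '' K
    with hJdef
  set C : Set (WeakDual ℝ (Lp ℝ 2 ν)) :=
    {φ | (∀ (A : Set S) (hA : MeasurableSet A),
        φ (ind A hA) ∈ Icc (0:ℝ) ((ν A).toReal)) ∧ ∀ j, φ (fL j) = t} with hCdef
  have happ : ∀ (g : Lp ℝ 2 ν) (v : Lp ℝ 2 ν), Φ g v = ⟪g, v⟫_ℝ :=
    fun g v => InnerProductSpace.toDual_apply_apply
  have hsymm : ∀ (φ : WeakDual ℝ (Lp ℝ 2 ν)) (v : Lp ℝ 2 ν),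
      ⟪Φ.symm φ, v⟫_ℝ = φ v := fun φ v => InnerProductSpace.toDual_symm_apply
  have hJC : J = C := by
    ext φ
    constructor
    · rintro ⟨g, hgK, rfl⟩
      constructor
      · intro A hA
        change Φ g (ind A hA) ∈ _
        rw [happ, hind_inner]
        constructor
        · refine setIntegral_nonneg_ae hA ?_
          filter_upwards [hgK.1] with x hx _
          exact hx.1
        · have hmono : ∫ x in A, g x ∂ν ≤ ∫ x in A, (1:ℝ) ∂ν := by
            refine integral_mono_ae ((hgint g).integrableOn)
              (integrableOn_const (measure_ne_top ν A)) ?_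
            exact ae_restrict_of_ae (hgK.1.mono fun x hx => hx.2)
          rwa [setIntegral_const, smul_eq_mul, mul_one] at hmono
      · intro j
        change Φ g (fL j) = t
        rw [happ]
        exact hgK.2 j
    · intro hφ
      refine ⟨Φ.symm φ, ⟨?_, ?_⟩, Φ.apply_symm_apply φ⟩
      · refine hrecover _ fun A hA => ?_
        have he : ∫ x in A, (Φ.symm φ) x ∂ν = φ (ind A hA) := by
          rw [← hind_inner]
          exact hsymm φ (ind A hA)
        rw [he]
        exact hφ.1 A hA
      · intro j
        rw [hsymm]
        exact hφ.2 j
  have hCclosed : IsClosed C := by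
    have : C = (⋂ (A : Set S), ⋂ (hA : MeasurableSet A),
        (fun φ : WeakDual ℝ (Lp ℝ 2 ν) => φ (ind A hA)) ⁻¹' (Icc (0:ℝ) ((ν A).toReal)))
        ∩ ⋂ j, (fun φ : WeakDual ℝ (Lp ℝ 2 ν) => φ (fL j)) ⁻¹' {t} := by
      ext φ
      simp only [hCdef, mem_setOf_eq, mem_inter_iff, mem_iInter, mem_preimage,
        mem_singleton_iff]
    rw [this]
    refine IsClosed.inter (isClosed_iInter fun A => isClosed_iInter fun hA => ?_)
      (isClosed_iInter fun j => ?_)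
    · exact IsClosed.preimage (WeakDual.eval_continuous _) isClosed_Icc
    · exact IsClosed.preimage (WeakDual.eval_continuous _) isClosed_singleton
  -- J is included in a closed ball of the dual
  set R : ℝ := (measureUnivNNReal ν : ℝ) ^ ((2:ℝ≥0∞).toReal)⁻¹ * 1 with hRdef
  have hJball : J ⊆ WeakDual.toStrongDual ⁻¹' Metric.closedBall 0 R := by
    rintro φ ⟨g, hgK, rfl⟩
    show dist (WeakDual.toStrongDual (Φ g)) 0 ≤ R
    rw [dist_zero_right]
    have : ‖Φ g‖ = ‖g‖ := Φ.norm_map g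
    rw [hRdef]
    calc ‖WeakDual.toStrongDual (Φ g)‖ = ‖g‖ := Φ.norm_map g
      _ ≤ _ := by
        refine Lp.norm_le_of_ae_bound zero_le_one ?_
        filter_upwards [hgK.1] with x hx
        rw [Real.norm_eq_abs, abs_of_nonneg hx.1]
        exact hx.2
  have hJcomp : IsCompact J :=
    (WeakDual.isCompact_closedBall (𝕜 := ℝ) (E := Lp ℝ 2 ν) 0 R).of_isClosed_subset (hJC ▸ hCclosed) hJball
  have hJconv : Convex ℝ J := by
    refine hKconv.is_linear_image ⟨fun x y => map_add Φ x y, fun c x => ?_⟩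
    simp
    rfl
  have hJne : J.Nonempty := hKne.image _
  haveI : LocallyConvexSpace ℝ (WeakDual ℝ (Lp ℝ 2 ν)) := WeakBilin.locallyConvexSpace
  obtain ⟨φex, hφex⟩ := hJcomp.extremePoints_nonempty hJne
  set g0 : Lp ℝ 2 ν := Φ.symm φex with hg0def
  have hg0K : g0 ∈ K := by
    obtain ⟨g, hgK, hgeq⟩ := hφex.1
    rw [hg0def, ← hgeq]
    simpa using hgK
  have hΦg0 : (Φ g0 : WeakDual ℝ (Lp ℝ 2 ν)) = φex := by
    rw [hg0def]; exact Φ.apply_symm_apply φex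
  have hext : ∀ h : Lp ℝ 2 ν, g0 + h ∈ K → g0 - h ∈ K → h = 0 := by
    intro h hp hm
    have h1 : (Φ (g0 + h) : WeakDual ℝ (Lp ℝ 2 ν)) ∈ J := ⟨_, hp, rfl⟩
    have h2 : (Φ (g0 - h) : WeakDual ℝ (Lp ℝ 2 ν)) ∈ J := ⟨_, hm, rfl⟩
    have hmid : φex ∈ openSegment ℝ (Φ (g0 + h) : WeakDual ℝ (Lp ℝ 2 ν))
        (Φ (g0 - h) : WeakDual ℝ (Lp ℝ 2 ν)) := by
      refine ⟨1/2, 1/2, by norm_num, by norm_num, by norm_num, ?_⟩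
      rw [← hΦg0, map_add, map_sub]
      module
    obtain ⟨e1, e2⟩ := (mem_extremePoints.mp hφex).2 _ h1 _ h2 hmid
    have heq : g0 + h = g0 := by
      have := congrArg Φ.symm e1
      simpa [hg0def] using this
    have : h = 0 := by
      have := congrArg (fun z => z - g0) heq
      simpa [add_sub_cancel_left] using this
    exact this

  -- measurable representative of the extreme point
  have hgm : AEMeasurable (⇑g0) ν := (Lp.aestronglyMeasurable g0).aemeasurable
  set G : S → ℝ := hgm.mk ⇑g0 with hGdef
  have hGmeas : Measurable G := hgm.measurable_mk
  have hGae : ⇑g0 =ᵐ[ν] G := hgm.ae_eq_mk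
  have hg0b : ∀ᵐ x ∂ν, 0 ≤ g0 x ∧ g0 x ≤ 1 := hg0K.1
  have hGb : ∀ᵐ x ∂ν, 0 ≤ G x ∧ G x ≤ 1 := by
    filter_upwards [hg0b, hGae] with x h1 h2
    rw [← h2]; exact h1
  -- the extreme point is a.e. {0,1}-valued
  have hkey : ∀ᵐ x ∂ν, G x = 0 ∨ G x = 1 := by
    by_contra hcon
    rw [ae_iff] at hcon
    set T : Set S := {x | ¬ (G x = 0 ∨ G x = 1)} with hTdef
    have hTmeas : MeasurableSet T := by
      have : T = (G ⁻¹' {0} ∪ G ⁻¹' {1})ᶜ := by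
        ext x; simp [hTdef, not_or]
      rw [this]
      exact ((hGmeas (measurableSet_singleton 0)).union
        (hGmeas (measurableSet_singleton 1))).compl
    have hTpos : 0 < ν T := pos_iff_ne_zero.mpr hcon
    -- the sets where G is bounded away from 0 and 1
    set Bn : ℕ → Set S := fun n => {x | 1 / (n + 2 : ℝ) ≤ G x} ∩ {x | G x ≤ 1 - 1 / (n + 2 : ℝ)}
      with hBndef
    have hBnmeas : ∀ n, MeasurableSet (Bn n) := fun n =>
      (measurableSet_le measurable_const hGmeas).inter
        (measurableSet_le hGmeas measurable_const)
    have hbad : ν {x | ¬ (0 ≤ G x ∧ G x ≤ 1)} = 0 := ae_iff.mp hGb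
    obtain ⟨n, hn⟩ : ∃ n, 0 < ν (Bn n) := by
      by_contra hall
      push_neg at hall
      have hzero : ν (⋃ n, Bn n) = 0 :=
        measure_iUnion_null fun n => le_antisymm (hall n) (zero_le)
      have hsub : T ⊆ (⋃ n, Bn n) ∪ {x | ¬ (0 ≤ G x ∧ G x ≤ 1)} := by
        intro x hx
        by_cases hb : 0 ≤ G x ∧ G x ≤ 1
        · left
          have h0 : 0 < G x := lt_of_le_of_ne hb.1 (fun h => hx (Or.inl h.symm))
          have h1 : G x < 1 := lt_of_le_of_ne hb.2 (fun h => hx (Or.inr h))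
          obtain ⟨n, hn⟩ := exists_nat_gt (max (1 / G x) (1 / (1 - G x)))
          refine mem_iUnion.mpr ⟨n, ?_, ?_⟩
          · show 1 / ((n:ℝ) + 2) ≤ G x
            have hlt : 1 / G x < (n : ℝ) + 2 :=
              lt_of_le_of_lt (le_max_left _ _) (by linarith [hn])
            rw [div_lt_iff₀ h0] at hlt
            rw [div_le_iff₀ (by positivity : (0:ℝ) < (n:ℝ) + 2)]
            nlinarith
          · show G x ≤ 1 - 1 / ((n:ℝ) + 2)
            have hlt : 1 / (1 - G x) < (n : ℝ) + 2 :=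
              lt_of_le_of_lt (le_max_right _ _) (by linarith [hn])
            have h1' : (0:ℝ) < 1 - G x := by linarith
            rw [div_lt_iff₀ h1'] at hlt
            have : 1 / ((n:ℝ) + 2) ≤ 1 - G x := by
              rw [div_le_iff₀ (by positivity : (0:ℝ) < (n:ℝ) + 2)]
              nlinarith
            linarith
        · right; exact hb
      have : ν T = 0 :=
        measure_mono_null hsub (le_antisymm
          ((measure_union_le _ _).trans (by rw [hzero, hbad, add_zero])) (zero_le))
      exact hTpos.ne' this
    set δ : ℝ := 1 / (n + 2 : ℝ) with hδdef
    have hδpos : 0 < δ := by positivity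
    have hB0prop : ∀ x ∈ Bn n, δ ≤ G x ∧ G x ≤ 1 - δ := fun x hx => ⟨hx.1, hx.2⟩
    -- split into M + 2 pieces of positive measure
    obtain ⟨B, hB, hBdisj⟩ := split_pieces hνna (M + 1) (Bn n) (hBnmeas n) hn
    -- kernel vector of the matrix of piece measures
    set Amat : Matrix (Fin (M + 1)) (Fin (M + 2)) ℝ := fun j k => (Q j (B k)).toReal
      with hAdef
    obtain ⟨c, hc0, hcker⟩ := exists_kernel_vec Amat
    set sc : ℝ := δ / (1 + ∑ k, |c k|) with hscdef
    have hsumabs : (0:ℝ) ≤ ∑ k, |c k| := Finset.sum_nonneg fun k _ => abs_nonneg _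
    have hscpos : 0 < sc := by
      rw [hscdef]
      positivity
    -- the perturbation
    set ψ : S → ℝ := fun x => ∑ k, (sc * c k) * (B k).indicator (fun _ => (1:ℝ)) x
      with hψdef
    have hψmeas : Measurable ψ := by
      refine Finset.measurable_sum _ fun k _ => ?_
      exact (measurable_const.indicator (hB k).1).const_mul _
    have hψbound : ∀ x, |ψ x| ≤ δ := by
      intro x
      have h1 : |ψ x| ≤ ∑ k, |(sc * c k) * (B k).indicator (fun _ => (1:ℝ)) x| :=
        Finset.abs_sum_le_sum_abs _ _
      have h2 : ∀ k : Fin (M + 2), |(sc * c k) * (B k).indicator (fun _ => (1:ℝ)) x|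
          ≤ sc * |c k| := by
        intro k
        rw [abs_mul, abs_mul, abs_of_nonneg hscpos.le]
        by_cases hx : x ∈ B k <;> simp [hx, abs_of_nonneg, mul_nonneg hscpos.le (abs_nonneg _)]
      have h3 : |ψ x| ≤ sc * ∑ k, |c k| := by
        refine h1.trans ?_
        rw [Finset.mul_sum]
        exact Finset.sum_le_sum fun k _ => h2 k
      refine h3.trans ?_
      rw [hscdef, div_mul_eq_mul_div, div_le_iff₀ (by positivity)]
      nlinarith
    have hψzero : ∀ x, x ∉ Bn n → ψ x = 0 := by
      intro x hx
      rw [hψdef]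
      refine Finset.sum_eq_zero fun k _ => ?_
      have : x ∉ B k := fun hxk => hx ((hB k).2.1 hxk)
      simp [this]
    have hψL2 : MemLp ψ 2 ν := by
      refine MemLp.of_bound hψmeas.aestronglyMeasurable δ ?_
      exact Filter.Eventually.of_forall fun x => by
        rw [Real.norm_eq_abs]; exact hψbound x
    set hLp : Lp ℝ 2 ν := hψL2.toLp ψ with hLpdef
    have hLpcoe : ⇑hLp =ᵐ[ν] ψ := hψL2.coeFn_toLp
    -- indicator times density computations
    have hindprod : ∀ (D : Set S) (x : S) (u : S → ℝ),
        D.indicator (fun _ => (1:ℝ)) x * u x = D.indicator u x := by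
      intro D x u
      by_cases hx : x ∈ D <;> simp [hx]
    have hfint : ∀ j, Integrable (f j) ν := fun j => MemLp.integrable one_le_two (hfL2 j)
    -- inner products of the perturbation with the densities vanish
    have hinnerψ : ∀ j, ⟪hLp, fL j⟫_ℝ = 0 := by
      intro j
      rw [hinner_f]
      have he : ∫ x, hLp x * f j x ∂ν = ∫ x, ψ x * f j x ∂ν := by
        refine integral_congr_ae ?_
        filter_upwards [hLpcoe] with x hx
        rw [hx]
      rw [he]
      have he2 : ∀ x, ψ x * f j x
          = ∑ k, (sc * c k) * (B k).indicator (f j) x := by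
        intro x
        rw [hψdef]
        rw [Finset.sum_mul]
        refine Finset.sum_congr rfl fun k _ => ?_
        rw [mul_assoc, hindprod]
      calc ∫ x, ψ x * f j x ∂ν
          = ∫ x, ∑ k, (sc * c k) * (B k).indicator (f j) x ∂ν :=
            integral_congr_ae (Filter.Eventually.of_forall fun x => he2 x)
        _ = ∑ k, ∫ x, (sc * c k) * (B k).indicator (f j) x ∂ν := by
            refine integral_finset_sum _ fun k _ => ?_
            exact ((hfint j).indicator (hB k).1).const_mul _
        _ = ∑ k, (sc * c k) * ((Q j) (B k)).toReal := by
            refine Finset.sum_congr rfl fun k _ => ?_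
            rw [integral_const_mul, integral_indicator (hB k).1, hsetint j _ (hB k).1]
        _ = sc * ∑ k, Amat j k * c k := by
            rw [Finset.mul_sum]
            exact Finset.sum_congr rfl fun k _ => by rw [hAdef]; ring
        _ = sc * (Amat.mulVec c) j := rfl
        _ = 0 := by rw [hcker]; simp
    -- both perturbed functions stay in K
    have hmemp : g0 + hLp ∈ K := by
      constructor
      · filter_upwards [hg0b, hGae, Lp.coeFn_add g0 hLp, hLpcoe] with x h1 h2 h3 h4
        rw [h3, Pi.add_apply, h4]
        by_cases hx : x ∈ Bn n
        · have hGx := hB0prop x hx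
          have habs := abs_le.mp (hψbound x)
          rw [h2]
          constructor <;> linarith [hGx.1, hGx.2, habs.1, habs.2]
        · rw [hψzero x hx, add_zero]
          exact h1
      · intro j
        rw [inner_add_left, hg0K.2 j, hinnerψ j, add_zero]
    have hmemm : g0 - hLp ∈ K := by
      constructor
      · filter_upwards [hg0b, hGae, Lp.coeFn_sub g0 hLp, hLpcoe] with x h1 h2 h3 h4
        rw [h3, Pi.sub_apply, h4]
        by_cases hx : x ∈ Bn n
        · have hGx := hB0prop x hx
          have habs := abs_le.mp (hψbound x)
          rw [h2]
          constructor <;> linarith [hGx.1, hGx.2, habs.1, habs.2]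
        · rw [hψzero x hx, sub_zero]
          exact h1
      · intro j
        rw [inner_sub_left, hg0K.2 j, hinnerψ j, sub_zero]
    have hzero := hext hLp hmemp hmemm
    -- but the perturbation is nonzero: contradiction
    obtain ⟨k₀, hck₀⟩ := Function.ne_iff.mp hc0
    have hψ0 : ψ =ᵐ[ν] 0 := by
      have h5 : ⇑hLp =ᵐ[ν] 0 := by
        rw [hzero]
        exact Lp.coeFn_zero ℝ 2 ν
      exact hLpcoe.symm.trans h5
    have hint0 : ∫ x in B k₀, ψ x ∂ν = 0 := by
      have h6 : ∫ x in B k₀, ψ x ∂ν = ∫ x in B k₀, (0:ℝ) ∂ν :=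
        integral_congr_ae (ae_restrict_of_ae hψ0)
      rw [h6, integral_zero]
    have hval : ∫ x in B k₀, ψ x ∂ν = sc * c k₀ * (ν (B k₀)).toReal := by
      calc ∫ x in B k₀, ψ x ∂ν
          = ∑ k, ∫ x in B k₀, (sc * c k) * (B k).indicator (fun _ => (1:ℝ)) x ∂ν := by
            simp only [hψdef]
            refine integral_finset_sum _ fun k _ => ?_
            exact (((integrable_const (1:ℝ)).indicator (hB k).1).const_mul _).integrableOn
        _ = ∑ k, (sc * c k) * (ν (B k ∩ B k₀)).toReal := by
            refine Finset.sum_congr rfl fun k _ => ?_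
            rw [integral_const_mul]
            congr 1
            rw [setIntegral_indicator (hB k).1, setIntegral_const, smul_eq_mul, mul_one,
              Set.inter_comm]
            rfl
        _ = sc * c k₀ * (ν (B k₀)).toReal := by
            rw [Finset.sum_eq_single k₀]
            · rw [Set.inter_self, mul_assoc]
            · intro k _ hk
              rw [Set.disjoint_iff_inter_eq_empty.mp (hBdisj hk), measure_empty]
              simp
            · intro hk
              exact absurd (Finset.mem_univ k₀) hk
    have hne0 : sc * c k₀ * (ν (B k₀)).toReal ≠ 0 := by
      have hν : 0 < (ν (B k₀)).toReal :=
        ENNReal.toReal_pos (hB k₀).2.2.ne' (measure_ne_top _ _)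
      exact mul_ne_zero (mul_ne_zero hscpos.ne' hck₀) hν.ne'
    rw [hint0] at hval
    exact hne0 hval.symm
  -- the set we are looking for
  set F : Set S := G ⁻¹' {1} with hFdef
  have hFmeas : MeasurableSet F := hGmeas (measurableSet_singleton 1)
  refine ⟨F, hFmeas, fun j => ?_⟩
  have ht' := hg0K.2 j
  rw [hinner_f] at ht'
  have hcong : ∫ x, F.indicator (f j) x ∂ν = ∫ x, g0 x * f j x ∂ν := by
    refine integral_congr_ae ?_
    filter_upwards [hkey, hGae] with x hx hGx
    rcases hx with h | h
    · have hxF : x ∉ F := by simp [hFdef, h]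
      simp [Set.indicator_of_notMem hxF, hGx, h]
    · have hxF : x ∈ F := by simp [hFdef, h]
      simp [Set.indicator_of_mem hxF, hGx, h]
  calc (Q j F).toReal = ∫ x in F, f j x ∂ν := (hsetint j F hFmeas).symm
    _ = ∫ x, F.indicator (f j) x ∂ν := (integral_indicator hFmeas).symm
    _ = ∫ x, g0 x * f j x ∂ν := hcong
    _ = t := ht'


end Helpers

/-- Let `ε ∈ [0,1]`, let `P₀, P₁, …, P_N` be nonatomic probability
measures, and let `Σ_u` consist of the events whose probability is agreed upon by all.
If for all `E ∈ Σ_S` and `F ∈ Σ_u`, `Pᵢ(E) ≥ Pᵢ(F)` for all `i` implies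
`P₀(E) ≥ P₀(F) − ε/2`, then `P₀(E) ≥ min_{1≤i≤N} Pᵢ(E) − ε/2` for every `E ∈ Σ_S`. -/
theorem stmt13 {S : Type*} [MeasurableSpace S]
    {N : ℕ} (hN : 1 ≤ N) {ε : ℝ} (hε0 : 0 ≤ ε) (hε1 : ε ≤ 1)
    (P₀ : Measure S) (P : Fin N → Measure S)
    [IsProbabilityMeasure P₀] [∀ i, IsProbabilityMeasure (P i)]
    (hP₀na : Nonatomic P₀) (hPna : ∀ i, Nonatomic (P i))
    (hdom : ∀ E F : Set S, MeasurableSet E → MeasurableSet F →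
      (∀ i, P i F = P₀ F) →
      (∀ i, P i F ≤ P i E) →
      (P₀ F).toReal - ε / 2 ≤ (P₀ E).toReal) :
    ∀ E : Set S, MeasurableSet E →
      (⨅ i : Fin N, (P i E).toReal) - ε / 2 ≤ (P₀ E).toReal := by
  intro E hE
  haveI hNne : Nonempty (Fin N) := ⟨⟨0, hN⟩⟩
  set m : ℝ := ⨅ i : Fin N, (P i E).toReal with hm
  have hm0 : 0 ≤ m := le_ciInf fun i => ENNReal.toReal_nonneg
  have hmle : ∀ i, m ≤ (P i E).toReal := fun i =>
    ciInf_le (Finite.bddBelow_range _) i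
  have hm1 : m ≤ 1 := by
    refine (hmle ⟨0, hN⟩).trans ?_
    calc (P ⟨0, hN⟩ E).toReal ≤ (1 : ℝ≥0∞).toReal :=
      ENNReal.toReal_mono ENNReal.one_ne_top prob_le_one
    _ = 1 := by simp
  set Q : Fin (N + 1) → Measure S := Fin.cases P₀ P with hQ
  haveI hQprob : ∀ j, IsProbabilityMeasure (Q j) := by
    intro j
    induction j using Fin.cases with
    | zero => simpa [hQ] using ‹IsProbabilityMeasure P₀›
    | succ i => simpa [hQ] using ‹∀ i, IsProbabilityMeasure (P i)› i
  have hQna : ∀ j, Nonatomic (Q j) := by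
    intro j
    induction j using Fin.cases with
    | zero => simpa [hQ] using hP₀na
    | succ i => simpa [hQ] using hPna i
  obtain ⟨F, hF, hFval⟩ := diag_lyapunov Q hQna hm0 hm1
  have hP₀F : (P₀ F).toReal = m := by
    have := hFval 0
    simpa [hQ] using this
  have hPiF : ∀ i, (P i F).toReal = m := by
    intro i
    have := hFval i.succ
    simpa [hQ] using this
  have hagree : ∀ i, P i F = P₀ F := by
    intro i
    have h1 : (P i F).toReal = (P₀ F).toReal := by rw [hPiF, hP₀F]
    exact (ENNReal.toReal_eq_toReal_iff' (measure_ne_top _ _) (measure_ne_top _ _)).1 h1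
  have hle : ∀ i, P i F ≤ P i E := by
    intro i
    have h1 : (P i F).toReal ≤ (P i E).toReal := by
      rw [hPiF]
      exact hmle i
    exact (ENNReal.toReal_le_toReal (measure_ne_top _ _) (measure_ne_top _ _)).1 h1
  have hmain := hdom E F hE hF hagree hle
  rw [hP₀F] at hmain
  exact hmain
end

section
/- Let ε ∈ [0,1] and let P₀, P₁, …, P_N be nonatomic probability measures on a measurable space (S, Σ_S) such that P₀(E) ≥ min_{1≤i≤N} P_i(E) − ε/2 for every E ∈ Σ_S. Then there exist λ₁, …, λ_N ≥ 0 with Σ_{i=1}^N λ_i = 1 such that the signed measure R = P₀ − Σ_{i=1}^N λ_i P_i satisfies ‖R‖₁ ≤ ε; in particular |P₀(E) − Σ_{i=1}^N λ_i P_i(E)| ≤ ε/2 for every E ∈ Σ_S. -/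
open MeasureTheory
open scoped ENNReal NNReal

namespace Stmt14Aux

variable {S : Type*} [MeasurableSpace S]

lemma half {ν : Measure S} [IsFiniteMeasure ν] (hna : Nonatomic ν)
    {E : Set S} (hE : MeasurableSet E) (hpos : 0 < ν E) :
    ∃ F, F ⊆ E ∧ MeasurableSet F ∧ 0 < ν F ∧ ν F ≤ ν E / 2 := by
  obtain ⟨F, hFE, hFm, hF0, hFlt⟩ := hna E hE hpos
  by_cases h : ν F ≤ ν E / 2
  · exact ⟨F, hFE, hFm, hF0, h⟩
  · push_neg at h
    refine ⟨E \ F, Set.diff_subset, hE.diff hFm, ?_, ?_⟩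
    · rw [measure_diff hFE hFm.nullMeasurableSet (measure_ne_top ν F)]
      exact tsub_pos_of_lt hFlt
    · rw [measure_diff hFE hFm.nullMeasurableSet (measure_ne_top ν F)]
      refine tsub_le_iff_right.mpr ?_
      calc ν E = ν E / 2 + ν E / 2 := (ENNReal.add_halves _).symm
      _ ≤ ν E / 2 + ν F := by gcongr

lemma small {ν : Measure S} [IsFiniteMeasure ν] (hna : Nonatomic ν)
    {E : Set S} (hE : MeasurableSet E) (hpos : 0 < ν E) {δ : ℝ≥0∞} (hδ : 0 < δ) :
    ∃ F, F ⊆ E ∧ MeasurableSet F ∧ 0 < ν F ∧ ν F ≤ δ := by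
  have key : ∀ n : ℕ, ∃ F, F ⊆ E ∧ MeasurableSet F ∧ 0 < ν F ∧ ν F ≤ ν E * 2⁻¹ ^ n := by
    intro n; induction n with
    | zero => exact ⟨E, subset_rfl, hE, hpos, by simp⟩
    | succ n ih =>
      obtain ⟨F, hFE, hFm, hF0, hFle⟩ := ih
      obtain ⟨G, hGF, hGm, hG0, hGle⟩ := half hna hFm hF0
      refine ⟨G, hGF.trans hFE, hGm, hG0, ?_⟩
      calc ν G ≤ ν F / 2 := hGle
      _ ≤ (ν E * 2⁻¹ ^ n) / 2 := by gcongr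
      _ = ν E * 2⁻¹ ^ (n + 1) := by
          rw [pow_succ, div_eq_mul_inv, mul_assoc]
  have hne0 : ν E ≠ 0 := hpos.ne'
  have hnetop : ν E ≠ ∞ := measure_ne_top ν E
  obtain ⟨n, hn⟩ := ENNReal.exists_inv_two_pow_lt
    (ENNReal.div_ne_zero.mpr ⟨hδ.ne', hnetop⟩ : δ / ν E ≠ 0)
  obtain ⟨F, hFE, hFm, hF0, hFle⟩ := key n
  refine ⟨F, hFE, hFm, hF0, hFle.trans ?_⟩
  calc ν E * 2⁻¹ ^ n ≤ ν E * (δ / ν E) := by gcongr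
  _ = δ := ENNReal.mul_div_cancel hne0 hnetop

lemma chunk {ν : Measure S} [IsFiniteMeasure ν] (hna : Nonatomic ν)
    {E : Set S} (hE : MeasurableSet E) {δ : ℝ≥0∞} (hδ0 : 0 < δ) (hδE : δ < ν E) :
    ∃ F, F ⊆ E ∧ MeasurableSet F ∧ δ / 2 < ν F ∧ ν F ≤ δ := by
  classical
  have hδtop : δ ≠ ∞ := (hδE.trans (measure_lt_top ν E)).ne
  have hhalfpos : 0 < δ / 2 := ENNReal.div_pos hδ0.ne' (by norm_num)
  have hhalftop : δ / 2 ≠ ∞ := by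
    exact (ENNReal.div_lt_top hδtop (by norm_num)).ne
  have key : ∀ F : Set S, ∃ G : Set S, MeasurableSet G ∧ G ⊆ E \ F ∧
      (MeasurableSet F → ν F ≤ δ / 2 →
        (0 < ν G ∧ ν G ≤ δ / 2 ∧
          ∀ G', G' ⊆ E \ F → MeasurableSet G' → ν G' ≤ δ / 2 → ν G' ≤ 2 * ν G)) := by
    intro F
    by_cases hF : MeasurableSet F ∧ ν F ≤ δ / 2
    · obtain ⟨hFm, hFle⟩ := hF
      have hEF : 0 < ν (E \ F) := by
        have h1 : ν E ≤ ν (E \ F) + ν F := by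
          refine (measure_mono (Set.subset_diff_union E F)).trans (measure_union_le _ _)
        by_contra hc
        push_neg at hc
        simp only [le_zero_iff] at hc
        rw [hc, zero_add] at h1
        exact absurd (h1.trans hFle) (not_le.mpr ((ENNReal.half_lt_self hδ0.ne' hδtop).trans hδE))
      set σ := ⨆ (G : Set S) (_ : G ⊆ E \ F ∧ MeasurableSet G ∧ ν G ≤ δ / 2), ν G with hσdef
      have hσle : σ ≤ δ / 2 := by
        refine iSup_le fun G => iSup_le fun hG => hG.2.2
      have hσpos : 0 < σ := by
        obtain ⟨G₀, hG₀sub, hG₀m, hG₀0, hG₀le⟩ := small hna (hE.diff hFm) hEF hhalfpos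
        calc 0 < ν G₀ := hG₀0
        _ ≤ σ := le_iSup₂ (f := fun (G : Set S)
            (_ : G ⊆ E \ F ∧ MeasurableSet G ∧ ν G ≤ δ / 2) => ν G) G₀ ⟨hG₀sub, hG₀m, hG₀le⟩
      have hσtop : σ ≠ ∞ := (hσle.trans_lt (hhalftop.lt_top)).ne
      have hhalf : σ / 2 < σ := ENNReal.half_lt_self hσpos.ne' hσtop
      rw [hσdef] at hhalf
      obtain ⟨G, hGgt⟩ := lt_iSup_iff.mp hhalf
      rw [lt_iSup_iff] at hGgt
      obtain ⟨⟨hGsub, hGm, hGle⟩, hGgt⟩ := hGgt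
      rw [← hσdef] at hGgt
      refine ⟨G, hGm, hGsub, fun _ _ => ⟨?_, hGle, ?_⟩⟩
      · exact lt_of_le_of_lt zero_le hGgt
      · intro G' hG'sub hG'm hG'le
        have h1 : ν G' ≤ σ := le_iSup₂ (f := fun (G : Set S)
            (_ : G ⊆ E \ F ∧ MeasurableSet G ∧ ν G ≤ δ / 2) => ν G) G' ⟨hG'sub, hG'm, hG'le⟩
        calc ν G' ≤ σ := h1
        _ = σ / 2 * 2 := (ENNReal.div_mul_cancel (by norm_num) (by norm_num)).symm
        _ ≤ ν G * 2 := by gcongr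
        _ = 2 * ν G := mul_comm _ _
    · exact ⟨∅, MeasurableSet.empty, Set.empty_subset _,
        fun h1 h2 => absurd ⟨h1, h2⟩ hF⟩
  choose G hGm hGsub hGgood using key
  set F : ℕ → Set S := fun n => Nat.rec ∅ (fun _ Fn => Fn ∪ G Fn) n with hFdef
  have hFs : ∀ n, F (n + 1) = F n ∪ G (F n) := fun n => rfl
  have hF0 : F 0 = ∅ := rfl
  have hFm : ∀ n, MeasurableSet (F n) := by
    intro n; induction n with
    | zero => exact MeasurableSet.empty
    | succ n ih => rw [hFs]; exact ih.union (hGm _)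
  have hFE : ∀ n, F n ⊆ E := by
    intro n; induction n with
    | zero => exact Set.empty_subset _
    | succ n ih =>
      rw [hFs]
      exact Set.union_subset ih ((hGsub _).trans Set.diff_subset)
  have hdisj : ∀ n, Disjoint (F n) (G (F n)) :=
    fun n => (Set.disjoint_sdiff_right.mono_right (hGsub _)).symm.symm
  have hν : ∀ n, ν (F (n + 1)) = ν (F n) + ν (G (F n)) := by
    intro n; rw [hFs]
    exact measure_union (Set.disjoint_sdiff_right.mono_right (hGsub _)) (hGm _)
  have hmono : Monotone F := by
    refine monotone_nat_of_le_succ fun n => ?_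
    rw [hFs]; exact Set.subset_union_left
  have main : ∃ n, δ / 2 < ν (F n) := by
    by_contra hcon
    push_neg at hcon
    have hact : ∀ n, 0 < ν (G (F n)) ∧ ν (G (F n)) ≤ δ / 2 ∧
        ∀ G', G' ⊆ E \ F n → MeasurableSet G' → ν G' ≤ δ / 2 → ν G' ≤ 2 * ν (G (F n)) :=
      fun n => hGgood _ (hFm n) (hcon n)
    set W := ⋃ n, F n with hWdef
    have hWm : MeasurableSet W := MeasurableSet.iUnion hFm
    have hWE : W ⊆ E := Set.iUnion_subset hFE
    have hWν : ν W ≤ δ / 2 := by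
      rw [hWdef, Directed.measure_iUnion (hmono.directed_le)]
      exact iSup_le hcon
    have hEW : 0 < ν (E \ W) := by
      rw [measure_diff hWE hWm.nullMeasurableSet (measure_ne_top ν W)]
      refine tsub_pos_of_lt (lt_of_le_of_lt hWν ?_)
      exact (ENNReal.half_lt_self hδ0.ne' hδtop).trans hδE
    obtain ⟨G', hG'sub, hG'm, hG'0, hG'le⟩ := small hna (hE.diff hWm) hEW hhalfpos
    have hsub : ∀ n, G' ⊆ E \ F n := by
      intro n
      refine hG'sub.trans (Set.diff_subset_diff_right ?_)
      exact Set.subset_iUnion F n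
    have hlow : ∀ n, ν G' / 2 ≤ ν (G (F n)) := by
      intro n
      have := (hact n).2.2 G' (hsub n) hG'm hG'le
      calc ν G' / 2 ≤ 2 * ν (G (F n)) / 2 := by gcongr
      _ = ν (G (F n)) := by
          rw [mul_comm, mul_div_assoc, ENNReal.div_self (by norm_num) (by norm_num), mul_one]
    have hsum : ∀ n : ℕ, (n : ℝ≥0∞) * (ν G' / 2) ≤ ν (F n) := by
      intro n; induction n with
      | zero => simp
      | succ n ih =>
        rw [hν n, Nat.cast_succ, add_mul, one_mul]
        exact add_le_add ih (hlow n)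
    have hG'2 : ν G' / 2 ≠ 0 := (ENNReal.div_pos hG'0.ne' (by norm_num)).ne'
    obtain ⟨n, hn⟩ := ENNReal.exists_nat_mul_gt hG'2 hhalftop
    exact absurd ((hn.trans_le (hsum n)).trans_le (hcon n)) (lt_irrefl _)
  have hfind := Nat.find_spec main
  set n₀ := Nat.find main with hn₀
  have hposn : n₀ ≠ 0 := by
    intro h
    rw [h, hF0] at hfind
    simp at hfind
  obtain ⟨m, hmn⟩ := Nat.exists_eq_succ_of_ne_zero hposn
  rw [hmn] at hfind
  have hm : ¬ δ / 2 < ν (F m) := Nat.find_min main (by omega)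
  push_neg at hm
  have hGle : ν (G (F m)) ≤ δ / 2 := (hGgood _ (hFm m) hm).2.1
  refine ⟨F (m + 1), hFE (m + 1), hFm (m + 1), hfind, ?_⟩
  rw [hν m]
  calc ν (F m) + ν (G (F m)) ≤ δ / 2 + δ / 2 := add_le_add hm hGle
  _ = δ := ENNReal.add_halves δ

lemma partition {ν : Measure S} [IsFiniteMeasure ν] (hna : Nonatomic ν)
    {δ : ℝ≥0∞} (hδ0 : 0 < δ) (hδtop : δ ≠ ∞) :
    ∀ E : Set S, MeasurableSet E →
    ∃ (n : ℕ) (C : Fin n → Set S), (∀ k, MeasurableSet (C k)) ∧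
      (∀ k l, k ≠ l → Disjoint (C k) (C l)) ∧ (⋃ k, C k) = E ∧ ∀ k, ν (C k) ≤ δ := by
  have hhalftop : δ / 2 ≠ ∞ := (ENNReal.div_lt_top hδtop (by norm_num)).ne
  suffices aux : ∀ (m : ℕ) (E : Set S), MeasurableSet E → ν E ≤ δ + m * (δ / 2) →
      ∃ (n : ℕ) (C : Fin n → Set S), (∀ k, MeasurableSet (C k)) ∧
      (∀ k l, k ≠ l → Disjoint (C k) (C l)) ∧ (⋃ k, C k) = E ∧ ∀ k, ν (C k) ≤ δ by
    intro E hE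
    obtain ⟨m, hm⟩ := ENNReal.exists_nat_mul_gt (a := δ / 2)
      (ENNReal.div_pos hδ0.ne' (by norm_num)).ne' (measure_ne_top ν E)
    exact aux m E hE (hm.le.trans le_add_self)
  intro m
  induction m with
  | zero =>
    intro E hE hle
    refine ⟨1, fun _ => E, fun _ => hE, fun k l hkl => absurd (Subsingleton.elim k l) hkl,
      Set.iUnion_const E, fun _ => ?_⟩
    simpa using hle
  | succ m ih =>
    intro E hE hle
    by_cases hEδ : ν E ≤ δ
    · exact ⟨1, fun _ => E, fun _ => hE, fun k l hkl => absurd (Subsingleton.elim k l) hkl,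
        Set.iUnion_const E, fun _ => hEδ⟩
    · push_neg at hEδ
      obtain ⟨F, hFE, hFm, hF1, hF2⟩ := chunk hna hE hδ0 hEδ
      have hsplit : ν E = ν F + ν (E \ F) := by
        rw [← measure_union Set.disjoint_sdiff_right (hE.diff hFm), Set.union_diff_cancel hFE]
      have hE' : ν (E \ F) ≤ δ + m * (δ / 2) := by
        rw [← ENNReal.add_le_add_iff_right hhalftop]
        calc ν (E \ F) + δ / 2 ≤ ν (E \ F) + ν F := by gcongr
        _ = ν E := by rw [add_comm]; exact hsplit.symm
        _ ≤ δ + (m + 1 : ℕ) * (δ / 2) := hle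
        _ = δ + m * (δ / 2) + δ / 2 := by
            rw [Nat.cast_succ, add_mul, one_mul, add_assoc]
      obtain ⟨n, C, hCm, hCd, hCu, hCδ⟩ := ih (E \ F) (hE.diff hFm) hE'
      have hCF : ∀ j, Disjoint F (C j) := by
        intro j
        have hsub : C j ⊆ E \ F := by rw [← hCu]; exact Set.subset_iUnion C j
        exact (Set.disjoint_sdiff_right (s := F) (t := E)).mono_right hsub
      refine ⟨n + 1, Fin.cons F C, ?_, ?_, ?_, ?_⟩
      · intro k
        refine Fin.cases ?_ ?_ k
        · exact hFm
        · intro j; rw [Fin.cons_succ]; exact hCm j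
      · intro k l
        induction k using Fin.cases with
        | zero =>
          induction l using Fin.cases with
          | zero => intro h; exact absurd rfl h
          | succ j => intro _; rw [Fin.cons_zero, Fin.cons_succ]; exact hCF j
        | succ i =>
          induction l using Fin.cases with
          | zero => intro _; rw [Fin.cons_zero, Fin.cons_succ]; exact (hCF i).symm
          | succ j =>
            intro h
            rw [Fin.cons_succ, Fin.cons_succ]
            exact hCd i j (fun hij => h (by rw [hij]))
      · have huni : (⋃ k : Fin (n + 1), (Fin.cons F C : Fin (n + 1) → Set S) k) = F ∪ ⋃ j, C j := by
          ext x
          simp only [Set.mem_iUnion, Set.mem_union]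
          constructor
          · rintro ⟨k, hk⟩
            revert hk
            induction k using Fin.cases with
            | zero => intro h; exact Or.inl h
            | succ j => intro h; rw [Fin.cons_succ] at h; exact Or.inr ⟨j, h⟩
          · rintro (h | ⟨j, hj⟩)
            · exact ⟨0, h⟩
            · exact ⟨j.succ, by rw [Fin.cons_succ]; exact hj⟩
        rw [huni, hCu, Set.union_diff_cancel hFE]
      · intro k
        refine Fin.cases ?_ ?_ k
        · exact hF2
        · intro j; rw [Fin.cons_succ]; exact hCδ j

lemma nonatomic_sum {ι : Type*} [Fintype ι] (μ : ι → Measure S)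
    [∀ i, IsFiniteMeasure (μ i)] (h : ∀ i, Nonatomic (μ i)) :
    Nonatomic (∑ i, μ i) := by
  intro E hE hpos
  have happ : ∀ A : Set S, (∑ i, μ i) A = ∑ i, μ i A := fun A =>
    Measure.finset_sum_apply Finset.univ μ A
  have hex : ∃ i, 0 < μ i E := by
    by_contra hc; push_neg at hc
    simp only [le_zero_iff] at hc
    rw [happ] at hpos
    simp [hc] at hpos
  obtain ⟨i, hi⟩ := hex
  obtain ⟨F, hFE, hFm, hF0, hFlt⟩ := h i E hE hi
  have hsingle : ∀ A : Set S, μ i A ≤ (∑ j, μ j) A := by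
    intro A
    rw [happ]
    exact Finset.single_le_sum (f := fun j => μ j A) (fun j _ => zero_le) (Finset.mem_univ i)
  refine ⟨F, hFE, hFm, lt_of_lt_of_le hF0 (hsingle F), ?_⟩
  have hdiff : 0 < μ i (E \ F) := by
    rw [measure_diff hFE hFm.nullMeasurableSet (measure_ne_top (μ i) F)]
    exact tsub_pos_of_lt hFlt
  have h2 : (∑ j, μ j) E = (∑ j, μ j) F + (∑ j, μ j) (E \ F) := by
    rw [← measure_union Set.disjoint_sdiff_right (hE.diff hFm), Set.union_diff_cancel hFE]
  have hfin : (∑ j, μ j) F ≠ ∞ := by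
    rw [happ]
    exact (ENNReal.sum_lt_top.mpr (fun j _ => measure_lt_top _ _)).ne
  rw [h2]
  exact ENNReal.lt_add_right hfin (lt_of_lt_of_le hdiff (hsingle _)).ne'

lemma rounding_aux {κ : Type*} [Fintype κ] [DecidableEq κ] {d : ℕ} (A : Fin d → κ → ℝ)
    {δ : ℝ} (hδ : 0 ≤ δ) (hA : ∀ i k, |A i k| ≤ δ) :
    ∀ (n : ℕ) (x : κ → ℝ), (∀ k, x k ∈ Set.Icc (0:ℝ) 1) →
      (Finset.univ.filter fun k => x k ≠ 0 ∧ x k ≠ 1).card ≤ n →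
      ∃ s : κ → ℝ, (∀ k, s k = 0 ∨ s k = 1) ∧
        ∀ i, |∑ k, s k * A i k - ∑ k, x k * A i k| ≤ d * δ := by
  intro n
  induction n with
  | zero =>
    intro x hx hcard
    -- no fractional coordinates
    have hall : ∀ k, x k = 0 ∨ x k = 1 := by
      intro k
      by_contra hk
      push_neg at hk
      have : k ∈ Finset.univ.filter fun k => x k ≠ 0 ∧ x k ≠ 1 := by
        simp [hk.1, hk.2]
      have := Finset.card_pos.mpr ⟨k, this⟩
      omega
    exact ⟨x, hall, fun i => by simpa using mul_nonneg (Nat.cast_nonneg d) hδ⟩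
  | succ n ih =>
    intro x hx hcard
    set Fr := Finset.univ.filter fun k => x k ≠ 0 ∧ x k ≠ 1 with hFr
    by_cases hle : Fr.card ≤ d
    · -- round all fractional coordinates down to 0
      refine ⟨fun k => if x k = 1 then 1 else 0, fun k => by by_cases h : x k = 1 <;> simp [h], ?_⟩
      intro i
      have hdiff : ∀ k, ((if x k = 1 then (1:ℝ) else 0) - x k) * A i k
          = if k ∈ Fr then (- x k) * A i k else 0 := by
        intro k
        by_cases h1 : x k = 1
        · simp [h1, hFr]
        by_cases h0 : x k = 0
        · simp [h0, h1, hFr]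
        · simp [h0, h1, hFr]
      have : ∑ k, (if x k = 1 then (1:ℝ) else 0) * A i k - ∑ k, x k * A i k
          = ∑ k ∈ Fr, (- x k) * A i k := by
        rw [← Finset.sum_sub_distrib]
        have hterm : ∀ k ∈ Finset.univ,
            (if x k = 1 then (1:ℝ) else 0) * A i k - x k * A i k
              = if k ∈ Fr then (- x k) * A i k else 0 := by
          intro k _
          rw [← sub_mul]
          exact hdiff k
        rw [Finset.sum_congr rfl hterm, Finset.sum_ite_mem, Finset.univ_inter]
      rw [this]
      calc |∑ k ∈ Fr, (- x k) * A i k| ≤ ∑ k ∈ Fr, |(- x k) * A i k| :=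
            Finset.abs_sum_le_sum_abs _ _
      _ ≤ ∑ _k ∈ Fr, δ := by
          refine Finset.sum_le_sum fun k hk => ?_
          rw [abs_mul, abs_neg]
          have hxk := hx k
          have h1 : |x k| ≤ 1 := by
            rw [abs_of_nonneg hxk.1]; exact hxk.2
          calc |x k| * |A i k| ≤ 1 * δ := by
                exact mul_le_mul h1 (hA i k) (abs_nonneg _) zero_le_one
          _ = δ := one_mul δ
      _ = Fr.card * δ := by rw [Finset.sum_const, nsmul_eq_mul]
      _ ≤ d * δ := by
          have : (Fr.card : ℝ) ≤ d := by exact_mod_cast hle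
          exact mul_le_mul_of_nonneg_right this hδ
    · -- more than d fractional coordinates: find a kernel direction
      push_neg at hle
      have hdep : ¬ LinearIndependent ℝ (fun k : ↥Fr => fun i => A i (k : κ)) := by
        intro hli
        have := hli.fintype_card_le_finrank
        rw [Module.finrank_fin_fun, Fintype.card_coe] at this
        omega
      obtain ⟨g, hg0, kne, hkne⟩ := Fintype.not_linearIndependent_iff.mp hdep
      set c : κ → ℝ := fun k => if h : k ∈ Fr then g ⟨k, h⟩ else 0 with hc
      have hcFr : ∀ k, c k ≠ 0 → k ∈ Fr := by
        intro k hk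
        by_contra h
        rw [hc] at hk; simp [h] at hk
      have hcsum : ∀ i, ∑ k, c k * A i k = 0 := by
        intro i
        have h1 : ∑ k, c k * A i k = ∑ k ∈ Fr, c k * A i k := by
          refine (Finset.sum_subset (Finset.subset_univ Fr) ?_).symm
          intro k _ hk
          have : c k = 0 := by rw [hc]; simp [hk]
          rw [this, zero_mul]
        have h2 : ∑ k ∈ Fr, c k * A i k = ∑ k : ↥Fr, g k * A i (k : κ) := by
          rw [← Finset.sum_coe_sort Fr (fun k => c k * A i k)]
          refine Finset.sum_congr rfl fun k _ => ?_
          rw [hc]; simp [k.2]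
        have h3 := congrFun hg0 i
        simp only [Finset.sum_apply, Pi.smul_apply, smul_eq_mul, Pi.zero_apply] at h3
        rw [h1, h2, h3]
      -- the set of moving coordinates
      set T := Finset.univ.filter fun k => c k ≠ 0 with hT
      have hTne : T.Nonempty := by
        refine ⟨(kne : κ), ?_⟩
        rw [hT]
        simp only [Finset.mem_filter, Finset.mem_univ, true_and, hc]
        simpa [kne.2] using hkne
      -- step sizes
      set ρ : κ → ℝ := fun k => if 0 < c k then (1 - x k) / c k else x k / (- c k) with hρ
      have hρpos : ∀ k ∈ T, 0 < ρ k := by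
        intro k hk
        rw [hT] at hk
        simp only [Finset.mem_filter, Finset.mem_univ, true_and] at hk
        have hkFr : k ∈ Fr := hcFr k hk
        rw [hFr] at hkFr
        simp only [Finset.mem_filter, Finset.mem_univ, true_and] at hkFr
        have hx0 : 0 < x k := lt_of_le_of_ne (hx k).1 (Ne.symm hkFr.1)
        have hx1 : x k < 1 := lt_of_le_of_ne (hx k).2 hkFr.2
        rw [hρ]
        by_cases hck : 0 < c k
        · simp only [hck, if_pos]
          exact div_pos (by linarith) hck
        · simp only [hck, if_neg]
          have : c k < 0 := lt_of_le_of_ne (not_lt.mp hck) hk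
          exact div_pos hx0 (by linarith)
      obtain ⟨k₀, hk₀T, hk₀⟩ := Finset.exists_mem_eq_inf' hTne ρ
      set τ := T.inf' hTne ρ with hτ
      have hτpos : 0 < τ := by rw [hk₀]; exact hρpos k₀ hk₀T
      set x' : κ → ℝ := fun k => x k + τ * c k with hx'
      -- feasibility
      have hfeas : ∀ k, x' k ∈ Set.Icc (0:ℝ) 1 := by
        intro k
        by_cases hck : c k = 0
        · rw [hx']; simp only [hck, mul_zero, add_zero]; exact hx k
        · have hkT : k ∈ T := by rw [hT]; simp [hck]
          have hkFr : k ∈ Fr := hcFr k hck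
          rw [hFr] at hkFr
          simp only [Finset.mem_filter, Finset.mem_univ, true_and] at hkFr
          have hx0 : 0 < x k := lt_of_le_of_ne (hx k).1 (Ne.symm hkFr.1)
          have hx1 : x k < 1 := lt_of_le_of_ne (hx k).2 hkFr.2
          have hτρ : τ ≤ ρ k := Finset.inf'_le ρ hkT
          rcases lt_or_gt_of_ne hck with hneg | hpos
          · constructor
            · have hρk : ρ k = x k / (- c k) := by
                rw [hρ]; simp [not_lt.mpr hneg.le]
              have : τ * (- c k) ≤ ρ k * (- c k) :=
                mul_le_mul_of_nonneg_right hτρ (by linarith)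
              rw [hρk, div_mul_cancel₀ _ (by linarith : - c k ≠ 0)] at this
              rw [hx']; simp only; nlinarith
            · rw [hx']; simp only; nlinarith
          · constructor
            · rw [hx']; simp only; nlinarith
            · have hρk : ρ k = (1 - x k) / c k := by rw [hρ]; simp [hpos]
              have : τ * c k ≤ ρ k * c k := mul_le_mul_of_nonneg_right hτρ hpos.le
              rw [hρk, div_mul_cancel₀ _ hpos.ne'] at this
              rw [hx']; simp only; nlinarith
      -- k₀ becomes integral
      have hk₀c : c k₀ ≠ 0 := by
        rw [hT] at hk₀T
        simpa using hk₀T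
      have hk₀int : x' k₀ = 0 ∨ x' k₀ = 1 := by
        rcases lt_or_gt_of_ne hk₀c with hneg | hpos
        · left
          have hρk : ρ k₀ = x k₀ / (- c k₀) := by
            rw [hρ]; simp [not_lt.mpr hneg.le]
          have hτk : τ = x k₀ / (- c k₀) := hk₀.trans hρk
          have hcc : x k₀ / (- c k₀) * c k₀ = - x k₀ := by
            rw [div_neg, neg_mul, div_mul_cancel₀ _ hk₀c]
          rw [hx']
          simp only
          rw [hτk, hcc]
          ring
        · right
          have hρk : ρ k₀ = (1 - x k₀) / c k₀ := by rw [hρ]; simp [hpos]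
          have hτk : τ = (1 - x k₀) / c k₀ := hk₀.trans hρk
          have hcc : (1 - x k₀) / c k₀ * c k₀ = 1 - x k₀ := div_mul_cancel₀ _ hk₀c
          rw [hx']
          simp only
          rw [hτk, hcc]
          ring
      have hFr' : (Finset.univ.filter fun k => x' k ≠ 0 ∧ x' k ≠ 1) ⊆ Fr.erase k₀ := by
        intro k hk
        simp only [Finset.mem_filter, Finset.mem_univ, true_and] at hk
        refine Finset.mem_erase.mpr ⟨?_, ?_⟩
        · rintro rfl
          rcases hk₀int with h | h
          · exact hk.1 h
          · exact hk.2 h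
        · by_contra hkFr
          have hck : c k = 0 := by rw [hc]; simp [hkFr]
          have hxx : x' k = x k := by rw [hx']; simp [hck]
          rw [hxx] at hk
          exact hkFr (by rw [hFr]; simp [hk.1, hk.2])
      have hcard' : (Finset.univ.filter fun k => x' k ≠ 0 ∧ x' k ≠ 1).card ≤ n := by
        have h1 := Finset.card_le_card hFr'
        have h2 : (Fr.erase k₀).card = Fr.card - 1 :=
          Finset.card_erase_of_mem (hcFr k₀ hk₀c)
        omega
      have hsums : ∀ i, ∑ k, x' k * A i k = ∑ k, x k * A i k := by
        intro i
        have hterm : ∀ k ∈ Finset.univ,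
            x' k * A i k = x k * A i k + τ * (c k * A i k) := by
          intro k _
          rw [hx']
          ring
        rw [Finset.sum_congr rfl hterm, Finset.sum_add_distrib, ← Finset.mul_sum,
          hcsum i, mul_zero, add_zero]
      obtain ⟨s, hs, hbound⟩ := ih x' hfeas hcard'
      refine ⟨s, hs, fun i => ?_⟩
      rw [← hsums i]
      exact hbound i

lemma core {S : Type*} [MeasurableSpace S] {N : ℕ} (hN : 1 ≤ N) {ε : ℝ} (hε0 : 0 ≤ ε)
    (P₀ : Measure S) (P : Fin N → Measure S)
    [IsProbabilityMeasure P₀] [∀ i, IsProbabilityMeasure (P i)]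
    (hP₀na : Nonatomic P₀) (hPna : ∀ i, Nonatomic (P i))
    (hmin : ∀ E : Set S, MeasurableSet E →
      (⨅ i : Fin N, (P i E).toReal) - ε / 2 ≤ (P₀ E).toReal) :
    ∃ l : Fin N → ℝ, (∀ i, 0 ≤ l i) ∧ (∑ i, l i) = 1 ∧
      ∀ E : Set S, MeasurableSet E →
        ∑ i, l i * (P i E).toReal ≤ (P₀ E).toReal + ε / 2 := by
  classical
  by_contra hcon
  push_neg at hcon
  -- Step 1: finite subcover of the simplex
  set ι := {p : Set S × ℕ // MeasurableSet p.1} with hι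
  set U : ι → Set (Fin N → ℝ) := fun p =>
    {l | (P₀ p.1.1).toReal + ε / 2 + 1 / ((p.1.2 : ℝ) + 1)
        < ∑ i, l i * (P i p.1.1).toReal} with hU
  have hUopen : ∀ p, IsOpen (U p) := by
    intro p
    have hc : Continuous fun l : Fin N → ℝ => ∑ i, l i * (P i p.1.1).toReal :=
      continuous_finset_sum _ fun i _ => (continuous_apply i).mul continuous_const
    exact isOpen_lt continuous_const hc
  have hcover : stdSimplex ℝ (Fin N) ⊆ ⋃ p, U p := by
    intro l hl
    obtain ⟨E, hEm, hE⟩ := hcon l hl.1 hl.2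
    obtain ⟨q, hq⟩ := exists_nat_one_div_lt
      (by linarith : (0:ℝ) < ∑ i, l i * (P i E).toReal - ((P₀ E).toReal + ε / 2))
    refine Set.mem_iUnion.mpr ⟨⟨(E, q), hEm⟩, ?_⟩
    simp only [hU, Set.mem_setOf_eq]
    linarith
  obtain ⟨t, ht⟩ := (isCompact_stdSimplex ℝ (Fin N)).elim_finite_subcover U hUopen hcover
  -- the simplex is nonempty
  have hNpos : 0 < N := hN
  set i₀ : Fin N := ⟨0, hNpos⟩ with hi₀
  set l₀ : Fin N → ℝ := fun i => if i = i₀ then 1 else 0 with hl₀def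
  have hl₀ : l₀ ∈ stdSimplex ℝ (Fin N) := by
    constructor
    · intro i; simp only [hl₀def]; split <;> norm_num
    · simp [hl₀def]
  have htne : t.Nonempty := by
    obtain ⟨p, hpt, _⟩ := Set.mem_iUnion₂.mp (ht hl₀)
    exact ⟨p, hpt⟩
  -- uniform margin
  set δ' : ℝ := t.inf' htne fun p => 1 / ((p.1.2 : ℝ) + 1) with hδ'
  have hδ'pos : 0 < δ' := by
    rw [hδ', Finset.lt_inf'_iff]
    intro p _
    positivity
  have hkey : ∀ l ∈ stdSimplex ℝ (Fin N), ∃ p ∈ t,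
      (P₀ p.1.1).toReal + ε / 2 + δ' < ∑ i, l i * (P i p.1.1).toReal := by
    intro l hl
    obtain ⟨p, hpt, hpU⟩ := Set.mem_iUnion₂.mp (ht hl)
    refine ⟨p, hpt, ?_⟩
    have h1 : δ' ≤ 1 / ((p.1.2 : ℝ) + 1) := Finset.inf'_le _ hpt
    simp only [hU, Set.mem_setOf_eq] at hpU
    linarith
  -- Step 2: separation
  set w : ι → Fin N → ℝ := fun p i =>
    (P i p.1.1).toReal - ((P₀ p.1.1).toReal + ε / 2 + δ') with hw
  set C : Set (Fin N → ℝ) := convexHull ℝ (w '' ↑t) with hC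
  set D : Set (Fin N → ℝ) := {x | ∀ i, 0 ≤ x i} with hD
  have hCcompact : IsCompact C := (t.finite_toSet.image w).isCompact_convexHull ℝ
  have hCconvex : Convex ℝ C := convex_convexHull ℝ _
  have hDclosed : IsClosed D := by
    have : D = ⋂ i, {x : Fin N → ℝ | 0 ≤ x i} := by
      ext x; simp [hD, Set.mem_iInter]
    rw [this]
    exact isClosed_iInter fun i => isClosed_le continuous_const (continuous_apply i)
  have hDconvex : Convex ℝ D := by
    intro x hx y hy a b ha hb _
    intro i
    simp only [Pi.add_apply, Pi.smul_apply, smul_eq_mul]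
    exact add_nonneg (mul_nonneg ha (hx i)) (mul_nonneg hb (hy i))
  have hnotdisj : ¬ Disjoint C D := by
    intro hdisj
    obtain ⟨f, u, v, hfC, huv, hfD⟩ :=
      geometric_hahn_banach_compact_closed hCconvex hCcompact hDconvex hDclosed hdisj
    have hv0 : v < 0 := by
      have h0D : (0 : Fin N → ℝ) ∈ D := fun i => le_refl 0
      have := hfD 0 h0D
      simpa using this
    have hfi : ∀ i, 0 ≤ f (Pi.single i 1) := by
      intro i
      by_contra hneg
      push_neg at hneg
      set M : ℝ := (v - 1) / f (Pi.single i 1) with hM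
      have hMpos : 0 < M := div_pos_of_neg_of_neg (by linarith) hneg
      have hMD : M • (Pi.single i 1 : Fin N → ℝ) ∈ D := by
        intro j
        simp only [Pi.smul_apply, smul_eq_mul, Pi.single_apply]
        split
        · linarith
        · simp
      have hfv := hfD _ hMD
      rw [_root_.map_smul] at hfv
      simp only [smul_eq_mul] at hfv
      rw [hM, div_mul_cancel₀ _ hneg.ne] at hfv
      linarith
    have hfx : ∀ x : Fin N → ℝ, f x = ∑ i, x i * f (Pi.single i 1) := by
      intro x
      have hrepr : x = ∑ i, x i • (Pi.single i 1 : Fin N → ℝ) := by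
        ext j
        rw [Finset.sum_apply]
        simp [Pi.single_apply]
      conv_lhs => rw [hrepr]
      rw [_root_.map_sum]
      refine Finset.sum_congr rfl fun i _ => ?_
      rw [_root_.map_smul, smul_eq_mul]
    set σ : ℝ := ∑ i, f (Pi.single i 1) with hσ
    have hσnn : 0 ≤ σ := Finset.sum_nonneg fun i _ => hfi i
    have hσpos : 0 < σ := by
      rcases eq_or_lt_of_le hσnn with heq | h
      · exfalso
        have hzero : ∀ i ∈ Finset.univ, f (Pi.single i (1:ℝ)) = 0 := by
          intro i _
          have := (Finset.sum_eq_zero_iff_of_nonneg fun i _ => hfi i).mp heq.symm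
          exact this i (Finset.mem_univ i)
        obtain ⟨p, hpt⟩ := htne
        have h1 : f (w p) < u :=
          hfC _ (subset_convexHull ℝ _ (Set.mem_image_of_mem w hpt))
        have h2 : f (w p) = 0 := by
          rw [hfx]
          exact Finset.sum_eq_zero fun i hi => by rw [hzero i hi, mul_zero]
        linarith
      · exact h
    set l : Fin N → ℝ := fun i => f (Pi.single i 1) / σ with hldef
    have hlmem : l ∈ stdSimplex ℝ (Fin N) := by
      constructor
      · intro i; exact div_nonneg (hfi i) hσnn
      · rw [hldef]
        simp only
        rw [← Finset.sum_div, ← hσ, div_self hσpos.ne']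
    obtain ⟨p, hpt, hp⟩ := hkey l hlmem
    have h1 : f (w p) < u :=
      hfC _ (subset_convexHull ℝ _ (Set.mem_image_of_mem w hpt))
    have h3 : ∑ i, l i * w p i = f (w p) / σ := by
      rw [hfx (w p), Finset.sum_div]
      refine Finset.sum_congr rfl fun i _ => ?_
      rw [hldef]
      simp only
      ring
    have h4 : ∑ i, l i * w p i
        = ∑ i, l i * (P i p.1.1).toReal - ((P₀ p.1.1).toReal + ε / 2 + δ') := by
      have hterm : ∀ i ∈ Finset.univ, l i * w p i
          = l i * (P i p.1.1).toReal - l i * ((P₀ p.1.1).toReal + ε / 2 + δ') := by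
        intro i _
        rw [hw]
        ring
      rw [Finset.sum_congr rfl hterm, Finset.sum_sub_distrib, ← Finset.sum_mul,
        hlmem.2, one_mul]
    have h5 : 0 < ∑ i, l i * w p i := by rw [h4]; linarith
    have h6 : f (w p) / σ < 0 :=
      div_neg_of_neg_of_pos (by linarith) hσpos
    rw [h3] at h5
    linarith
  rw [Set.not_disjoint_iff] at hnotdisj
  obtain ⟨x, hxC, hxD⟩ := hnotdisj
  rw [hC, mem_convexHull_iff_exists_fintype] at hxC
  obtain ⟨κ₀, hκ₀, cw, z, hcw0, hcw1, hz, hzx⟩ := hxC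
  have hzsel : ∀ j : κ₀, ∃ p : ι, p ∈ t ∧ w p = z j := fun j => by
    obtain ⟨p, hp1, hp2⟩ := (Set.mem_image _ _ _).mp (hz j)
    exact ⟨p, hp1, hp2⟩
  choose pt hptmem hwpt using hzsel
  -- notation for the N+1 measures
  set Q : Fin (N + 1) → Measure S := Fin.cons P₀ P with hQ
  haveI hQprob : ∀ a, IsProbabilityMeasure (Q a) := by
    intro a
    refine Fin.cases ?_ ?_ a
    · rw [hQ, Fin.cons_zero]; infer_instance
    · intro i; rw [hQ, Fin.cons_succ]; infer_instance
  haveI hQfin : ∀ a, IsFiniteMeasure (Q a) := fun a => by haveI := hQprob a; infer_instance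
  set Ej : κ₀ → Set S := fun j => (pt j).1.1 with hEj
  have hEjm : ∀ j, MeasurableSet (Ej j) := fun j => (pt j).2
  set Bv : Fin (N + 1) → ℝ := fun a => ∑ j, cw j * (Q a (Ej j)).toReal with hBv
  -- the separation inequality in terms of Bv
  have hsep : ∀ i : Fin N, Bv 0 + ε / 2 + δ' ≤ Bv i.succ := by
    intro i
    have hx0 : 0 ≤ x i := hxD i
    have hxi : x i = ∑ j, cw j * w (pt j) i := by
      rw [← hzx, Finset.sum_apply]
      refine Finset.sum_congr rfl fun j _ => ?_
      rw [← hwpt j]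
      simp
    rw [hxi] at hx0
    have hterm : ∀ j ∈ Finset.univ, cw j * w (pt j) i
        = cw j * (Q i.succ (Ej j)).toReal
          - cw j * (Q 0 (Ej j)).toReal - cw j * (ε / 2 + δ') := by
      intro j _
      rw [hw, hQ]
      simp only [Fin.cons_succ, Fin.cons_zero]
      ring
    rw [Finset.sum_congr rfl hterm] at hx0
    rw [Finset.sum_sub_distrib, Finset.sum_sub_distrib, ← Finset.sum_mul, hcw1, one_mul]
      at hx0
    rw [hBv]
    simp only
    linarith
  -- Step 3: approximate Lyapunov via partition + rounding
  set ν : Measure S := ∑ a, Q a with hν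
  have hνapp : ∀ A : Set S, ν A = ∑ a, Q a A := fun A =>
    Measure.finset_sum_apply Finset.univ Q A
  haveI hνfin : IsFiniteMeasure ν := by
    constructor
    rw [hνapp]
    exact ENNReal.sum_lt_top.mpr fun a _ => measure_lt_top _ _
  have hνna : Nonatomic ν := nonatomic_sum Q (fun a => Fin.cases hP₀na hPna a)
  set δ₂ : ℝ := δ' / (4 * (N + 1)) with hδ₂
  have hδ₂pos : 0 < δ₂ := by rw [hδ₂]; positivity
  obtain ⟨n, Cs, hCsm, hCsd, hCsu, hCsδ⟩ :=
    partition hνna (δ := ENNReal.ofReal δ₂) (ENNReal.ofReal_pos.mpr hδ₂pos)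
      ENNReal.ofReal_ne_top Set.univ MeasurableSet.univ
  -- atoms of the algebra generated by the Ej
  set At : (κ₀ → Bool) → Set S := fun b => ⋂ j, (if b j then Ej j else (Ej j)ᶜ) with hAt
  have hAtm : ∀ b, MeasurableSet (At b) := by
    intro b
    refine MeasurableSet.iInter fun j => ?_
    by_cases hb : b j = true
    · rw [if_pos hb]; exact hEjm j
    · rw [if_neg hb]; exact (hEjm j).compl
  have hAtsub : ∀ b j, At b ⊆ (if b j then Ej j else (Ej j)ᶜ) := fun b j =>
    Set.iInter_subset _ j
  have hAtdisj : ∀ b b', b ≠ b' → Disjoint (At b) (At b') := by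
    intro b b' hbb
    obtain ⟨j, hj⟩ := Function.ne_iff.mp hbb
    have h1 := hAtsub b j
    have h2 := hAtsub b' j
    cases hb : b j
    · cases hb' : b' j
      · exact absurd (hb.trans hb'.symm) hj
      · rw [hb] at h1; rw [hb'] at h2
        simp only [if_true, if_false] at h1 h2 ⊢
        exact (disjoint_compl_right.mono h2 h1).symm
    · cases hb' : b' j
      · rw [hb] at h1; rw [hb'] at h2
        simp only [if_true, if_false] at h1 h2 ⊢
        exact disjoint_compl_right.mono h1 h2
      · exact absurd (hb.trans hb'.symm) hj
  have hAtcover : ∀ y : S, y ∈ At (fun j => decide (y ∈ Ej j)) := by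
    intro y
    refine Set.mem_iInter.mpr fun j => ?_
    by_cases hy : y ∈ Ej j
    · simp [hy]
    · simp [hy]
  -- cells
  set cell : Fin n × (κ₀ → Bool) → Set S := fun g => Cs g.1 ∩ At g.2 with hcell
  have hcellm : ∀ g, MeasurableSet (cell g) := fun g => (hCsm g.1).inter (hAtm g.2)
  have hcelldisj : ∀ g g', g ≠ g' → Disjoint (cell g) (cell g') := by
    intro g g' hgg
    by_cases h1 : g.1 = g'.1
    · have h2 : g.2 ≠ g'.2 := fun h2 => hgg (Prod.ext h1 h2)
      exact (hAtdisj _ _ h2).mono Set.inter_subset_right Set.inter_subset_right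
    · exact (hCsd _ _ h1).mono Set.inter_subset_left Set.inter_subset_left
  have hcellsmall : ∀ g, ν (cell g) ≤ ENNReal.ofReal δ₂ := fun g =>
    le_trans (measure_mono Set.inter_subset_left) (hCsδ g.1)
  -- decomposition of each Ej into cells
  have hEdecomp : ∀ (j : κ₀) (a : Fin (N + 1)), (Q a (Ej j)).toReal
      = ∑ g ∈ Finset.univ.filter (fun g : Fin n × (κ₀ → Bool) => g.2 j = true),
          (Q a (cell g)).toReal := by
    intro j a
    have hunion : (⋃ g ∈ Finset.univ.filter
        (fun g : Fin n × (κ₀ → Bool) => g.2 j = true), cell g) = Ej j := by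
      apply Set.Subset.antisymm
      · refine Set.iUnion₂_subset fun g hg => ?_
        simp only [Finset.mem_filter, Finset.mem_univ, true_and] at hg
        have hsb := hAtsub g.2 j
        rw [hg] at hsb
        simp only [if_true] at hsb
        exact Set.inter_subset_right.trans hsb
      · intro y hy
        obtain ⟨k, hk⟩ : ∃ k, y ∈ Cs k := by
          have : y ∈ ⋃ k, Cs k := by rw [hCsu]; trivial
          exact Set.mem_iUnion.mp this
        refine Set.mem_iUnion₂.mpr
          ⟨(k, fun j' => decide (y ∈ Ej j')), ?_, ⟨hk, hAtcover y⟩⟩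
        simp only [Finset.mem_filter, Finset.mem_univ, true_and]
        simp [hy]
    have hmeasun : Q a (Ej j) = ∑ g ∈ Finset.univ.filter
        (fun g : Fin n × (κ₀ → Bool) => g.2 j = true), Q a (cell g) := by
      rw [← hunion]
      exact measure_biUnion_finset
        (fun g _ g' _ hne => hcelldisj g g' hne) (fun g _ => hcellm g)
    rw [hmeasun, ENNReal.toReal_sum fun g _ => measure_ne_top _ _]
  -- fractional weights on cells
  set xf : Fin n × (κ₀ → Bool) → ℝ :=
    fun g => ∑ j ∈ Finset.univ.filter (fun j => g.2 j = true), cw j with hxf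
  have hxf01 : ∀ g, xf g ∈ Set.Icc (0:ℝ) 1 := by
    intro g
    constructor
    · exact Finset.sum_nonneg fun j _ => hcw0 j
    · rw [← hcw1]
      exact Finset.sum_le_sum_of_subset_of_nonneg (Finset.subset_univ _)
        fun j _ _ => hcw0 j
  have hident : ∀ a : Fin (N + 1), ∑ g, xf g * (Q a (cell g)).toReal = Bv a := by
    intro a
    have h1 : ∀ g ∈ Finset.univ, xf g * (Q a (cell g)).toReal
        = ∑ j, (if g.2 j = true then cw j * (Q a (cell g)).toReal else 0) := by
      intro g _
      rw [hxf]
      simp only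
      rw [Finset.sum_mul, Finset.sum_filter]
    rw [Finset.sum_congr rfl h1, Finset.sum_comm, hBv]
    simp only
    refine Finset.sum_congr rfl fun j _ => ?_
    rw [← Finset.sum_filter, ← Finset.mul_sum, ← hEdecomp j a]
  -- rounding
  set M : Fin (N + 1) → Fin n × (κ₀ → Bool) → ℝ :=
    fun a g => (Q a (cell g)).toReal with hM
  have hMbound : ∀ a g, |M a g| ≤ δ₂ := by
    intro a g
    rw [hM]
    simp only
    rw [abs_of_nonneg ENNReal.toReal_nonneg]
    have h1 : Q a (cell g) ≤ ν (cell g) := by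
      rw [hνapp]
      exact Finset.single_le_sum (f := fun a => Q a (cell g))
        (fun _ _ => zero_le) (Finset.mem_univ a)
    have h2 := le_trans h1 (hcellsmall g)
    calc (Q a (cell g)).toReal ≤ (ENNReal.ofReal δ₂).toReal :=
          ENNReal.toReal_mono ENNReal.ofReal_ne_top h2
    _ = δ₂ := ENNReal.toReal_ofReal hδ₂pos.le
  obtain ⟨sc, hsc01, hscbound⟩ := rounding_aux M hδ₂pos.le hMbound
    (Finset.univ.filter fun g : Fin n × (κ₀ → Bool) => xf g ≠ 0 ∧ xf g ≠ 1).card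
    xf hxf01 le_rfl
  set Estar : Set S := ⋃ g ∈ Finset.univ.filter
    (fun g : Fin n × (κ₀ → Bool) => sc g = 1), cell g with hEstar
  have hEstarm : MeasurableSet Estar := by
    rw [hEstar]
    exact (Finset.univ.filter
      (fun g : Fin n × (κ₀ → Bool) => sc g = 1)).measurableSet_biUnion
      fun g _ => hcellm g
  have hEstarval : ∀ a : Fin (N + 1), (Q a Estar).toReal = ∑ g, sc g * M a g := by
    intro a
    rw [hEstar]
    have hmeasun : Q a (⋃ g ∈ Finset.univ.filter
        (fun g : Fin n × (κ₀ → Bool) => sc g = 1), cell g)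
        = ∑ g ∈ Finset.univ.filter (fun g : Fin n × (κ₀ → Bool) => sc g = 1),
            Q a (cell g) :=
      measure_biUnion_finset (fun g _ g' _ hne => hcelldisj g g' hne)
        (fun g _ => hcellm g)
    rw [hmeasun, ENNReal.toReal_sum fun g _ => measure_ne_top _ _, Finset.sum_filter]
    refine Finset.sum_congr rfl fun g _ => ?_
    rcases hsc01 g with h0 | h1
    · rw [h0]
      simp
    · rw [h1]
      simp [hM]
  -- final contradiction
  have hcast : ((N + 1 : ℕ) : ℝ) * δ₂ = δ' / 4 := by
    rw [hδ₂]
    have : ((N + 1 : ℕ) : ℝ) = (N : ℝ) + 1 := by push_cast; ring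
    rw [this]
    have hNne : (N : ℝ) + 1 ≠ 0 := by positivity
    field_simp
  have hclose : ∀ a : Fin (N + 1), |(Q a Estar).toReal - Bv a| ≤ δ' / 4 := by
    intro a
    have hb := hscbound a
    rw [hident a] at hb
    rw [hEstarval a]
    calc |∑ g, sc g * M a g - Bv a| ≤ ((N + 1 : ℕ) : ℝ) * δ₂ := hb
    _ = δ' / 4 := hcast
  have hP₀close := hclose 0
  have hQ0 : Q 0 = P₀ := by rw [hQ]; exact Fin.cons_zero _ _
  rw [hQ0] at hP₀close
  haveI : Nonempty (Fin N) := ⟨i₀⟩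
  have hup : (P₀ Estar).toReal + ε / 2 + δ' / 2 ≤ ⨅ i : Fin N, (P i Estar).toReal := by
    refine le_ciInf fun i => ?_
    have h1 := hclose i.succ
    have h2 := hsep i
    have hQs : Q i.succ = P i := by rw [hQ]; exact Fin.cons_succ _ _ _
    rw [hQs] at h1
    have h3 := abs_le.mp h1
    have h4 := abs_le.mp hP₀close
    linarith
  have hmin' := hmin Estar hEstarm
  linarith

end Stmt14Aux

/-- Let `ε ∈ [0,1]` and let `P₀, P₁, …, P_N` be nonatomic probability
measures such that `P₀(E) ≥ min_{1≤i≤N} Pᵢ(E) − ε/2` for every measurable `E`.  Then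
there are weights `λ₁,…,λ_N ≥ 0` summing to `1` such that the signed measure
`R = P₀ − Σᵢ λᵢ Pᵢ` satisfies `‖R‖₁ ≤ ε`; in particular
`|P₀(E) − Σᵢ λᵢ Pᵢ(E)| ≤ ε/2` for every measurable `E`. -/
theorem stmt14 {S : Type*} [MeasurableSpace S]
    {N : ℕ} (hN : 1 ≤ N) {ε : ℝ} (hε0 : 0 ≤ ε) (hε1 : ε ≤ 1)
    (P₀ : Measure S) (P : Fin N → Measure S)
    [IsProbabilityMeasure P₀] [∀ i, IsProbabilityMeasure (P i)]
    (hP₀na : Nonatomic P₀) (hPna : ∀ i, Nonatomic (P i))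
    (hmin : ∀ E : Set S, MeasurableSet E →
      (⨅ i : Fin N, (P i E).toReal) - ε / 2 ≤ (P₀ E).toReal) :
    ∃ l : Fin N → ℝ, (∀ i, 0 ≤ l i) ∧ (∑ i, l i) = 1 ∧
      (P₀.toSignedMeasure - ∑ i, l i • (P i).toSignedMeasure).totalVariation
          Set.univ ≤ ENNReal.ofReal ε ∧
      ∀ E : Set S, MeasurableSet E →
        |(P₀ E).toReal - ∑ i, l i * (P i E).toReal| ≤ ε / 2 := by
  obtain ⟨l, hl0, hl1, hbound⟩ := Stmt14Aux.core hN hε0 P₀ P hP₀na hPna hmin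
  set ξ : SignedMeasure S := P₀.toSignedMeasure - ∑ i, l i • (P i).toSignedMeasure
    with hξ
  have happly : ∀ E : Set S, MeasurableSet E →
      ξ E = (P₀ E).toReal - ∑ i, l i * (P i E).toReal := by
    intro E hE
    rw [hξ, VectorMeasure.sub_apply, Measure.toSignedMeasure_apply_measurable hE]
    congr 1
    have hcoe : ⇑(∑ i, l i • (P i).toSignedMeasure) =
        ∑ i, ⇑(l i • (P i).toSignedMeasure) :=
      _root_.map_sum (VectorMeasure.coeFnAddMonoidHom _ _ _ : SignedMeasure S →+ Set S → ℝ)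
        (fun i => l i • (P i).toSignedMeasure) Finset.univ
    rw [show (∑ i, l i • (P i).toSignedMeasure) E
        = (⇑(∑ i, l i • (P i).toSignedMeasure)) E from rfl, hcoe, Finset.sum_apply]
    refine Finset.sum_congr rfl fun i _ => ?_
    rw [show (⇑(l i • (P i).toSignedMeasure)) E = (l i • (P i).toSignedMeasure) E from rfl,
      VectorMeasure.smul_apply, Measure.toSignedMeasure_apply_measurable hE, smul_eq_mul]
    rfl
  have hcompl : ∀ (μ : Measure S), IsProbabilityMeasure μ → ∀ E : Set S, MeasurableSet E →
      (μ Eᶜ).toReal = 1 - (μ E).toReal := by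
    intro μ hμ E hE
    rw [prob_compl_eq_one_sub hE, ENNReal.toReal_sub_of_le prob_le_one ENNReal.one_ne_top,
      ENNReal.toReal_one]
  have habs : ∀ E : Set S, MeasurableSet E → |ξ E| ≤ ε / 2 := by
    intro E hE
    rw [abs_le]
    constructor
    · rw [happly E hE]
      have := hbound E hE
      linarith
    · rw [happly E hE]
      have hb := hbound Eᶜ hE.compl
      have hP₀c : (P₀ Eᶜ).toReal = 1 - (P₀ E).toReal := hcompl P₀ inferInstance E hE
      have hsum : ∑ i, l i * (P i Eᶜ).toReal = 1 - ∑ i, l i * (P i E).toReal := by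
        have hterm : ∀ i ∈ Finset.univ, l i * (P i Eᶜ).toReal
            = l i - l i * (P i E).toReal := by
          intro i _
          rw [hcompl (P i) inferInstance E hE]
          ring
        rw [Finset.sum_congr rfl hterm, Finset.sum_sub_distrib, hl1]
      rw [hP₀c, hsum] at hb
      linarith
  refine ⟨l, hl0, hl1, ?_, fun E hE => by rw [← happly E hE]; exact habs E hE⟩
  obtain ⟨D, hD1, hD2, hD3, hpos, hneg⟩ := ξ.toJordanDecomposition_spec
  have h1 : ξ D ≤ ε / 2 := (abs_le.mp (habs D hD1)).2
  have h2 : - ξ Dᶜ ≤ ε / 2 := by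
    have := (abs_le.mp (habs Dᶜ hD1.compl)).1
    linarith
  have h1' : 0 ≤ ξ D := VectorMeasure.nonneg_of_zero_le_restrict ξ hD2
  have h2' : 0 ≤ - ξ Dᶜ := by
    have := VectorMeasure.nonpos_of_restrict_le_zero ξ hD3
    linarith
  rw [← hξ, SignedMeasure.totalVariation, Measure.add_apply, hpos, hneg,
    SignedMeasure.toMeasureOfZeroLE_apply _ hD2 hD1 MeasurableSet.univ,
    SignedMeasure.toMeasureOfLEZero_apply _ hD3 hD1.compl MeasurableSet.univ]
  simp only [Set.inter_univ]
  rw [← ENNReal.ofReal_eq_coe_nnreal, ← ENNReal.ofReal_eq_coe_nnreal,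
    ← ENNReal.ofReal_add h1' h2']
  exact ENNReal.ofReal_le_ofReal (by linarith)
end

section
/- Let X = {(x₁, x₂) ∈ ℝ² : x₁² + x₂² ≤ 1, x₁ ≥ 0, x₂ ≥ 0}, and define u₀, u₁ : X → ℝ by u₀(x₁, x₂) = −x₁ and u₁(x₁, x₂) = x₂. Then: (1) the pair (u₀, {u₁}) satisfies 1-Strong Pareto, i.e. for all x, y ∈ X, u₁(x) ≥ u₁(y) implies u₀(x) ≥ u₀(y) − 1, and u₁(x) > u₁(y) implies u₀(x) > u₀(y) − 1; and (2) for every a₁ > 0 the function u₀ − a₁u₁ has oscillation ω(u₀ − a₁u₁) ≥ √(1 + a₁²) > 1, so there is no w(x) = a₁u₁(x) + b with a₁ > 0 and ‖u₀ − w‖∞ ≤ 1/2. -/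
/-- The quarter disc `X = {(x₁,x₂) ∈ ℝ² : x₁² + x₂² ≤ 1, x₁ ≥ 0, x₂ ≥ 0}`. -/
def quarterDisc : Set (ℝ × ℝ) :=
  {p : ℝ × ℝ | p.1 ^ 2 + p.2 ^ 2 ≤ 1 ∧ 0 ≤ p.1 ∧ 0 ≤ p.2}

lemma sqrt_gt_one {a₁ : ℝ} (ha : 0 < a₁) : (1 : ℝ) < Real.sqrt (1 + a₁ ^ 2) := by
  have h : (1 : ℝ) < 1 + a₁ ^ 2 := by nlinarith
  calc (1 : ℝ) = Real.sqrt 1 := by simp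
    _ < Real.sqrt (1 + a₁ ^ 2) := Real.sqrt_lt_sqrt (by norm_num) h

lemma key_point {a₁ : ℝ} (ha : 0 < a₁) :
    let r := Real.sqrt (1 + a₁ ^ 2)
    (1/r, a₁/r) ∈ quarterDisc ∧ -(1/r) - a₁ * (a₁/r) = -r := by
  intro r
  have hr2 : r ^ 2 = 1 + a₁ ^ 2 := Real.sq_sqrt (by positivity)
  have hr : 0 < r := by
    have := sqrt_gt_one ha; linarith
  constructor
  · refine ⟨?_, by positivity, by positivity⟩
    have : (1/r) ^ 2 + (a₁/r) ^ 2 = (1 + a₁ ^ 2) / r ^ 2 := by ring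
    rw [this, hr2, div_self (by positivity)]
  · field_simp
    nlinarith [hr2]

/-- Example: 1-Strong Pareto without positive-weight aggregation.
With `u₀(x₁,x₂) = −x₁` and `u₁(x₁,x₂) = x₂` on the quarter disc:
(1) the pair `(u₀, {u₁})` satisfies 1-Strong Pareto; and
(2) for every `a₁ > 0` the oscillation of `u₀ − a₁ u₁` is at least
`√(1 + a₁²) > 1`, so there is no `w = a₁ u₁ + b` with `a₁ > 0` and
`‖u₀ − w‖∞ ≤ 1/2`. -/
theorem stmt15 :
    -- (1) 1-Strong Pareto
    (∀ x ∈ quarterDisc, ∀ y ∈ quarterDisc,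
      (y.2 ≤ x.2 → -y.1 - 1 ≤ -x.1) ∧ (y.2 < x.2 → -y.1 - 1 < -x.1)) ∧
    -- (2) the oscillation lower bound
    (∀ a₁ : ℝ, 0 < a₁ →
      (1 : ℝ) < Real.sqrt (1 + a₁ ^ 2) ∧
      Real.sqrt (1 + a₁ ^ 2) ≤
        sSup ((fun p : ℝ × ℝ => -p.1 - a₁ * p.2) '' quarterDisc) -
          sInf ((fun p : ℝ × ℝ => -p.1 - a₁ * p.2) '' quarterDisc)) ∧
    -- hence no strictly positive approximate aggregator
    ¬ ∃ (a₁ b : ℝ), 0 < a₁ ∧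
        ∀ p ∈ quarterDisc, |(-p.1) - (a₁ * p.2 + b)| ≤ 1 / 2 := by
  refine ⟨?_, ?_, ?_⟩
  · rintro x ⟨hx1, hx2, hx3⟩ y ⟨hy1, hy2, hy3⟩
    constructor
    · intro _; nlinarith
    · intro h
      have hx2pos : 0 < x.2 := lt_of_le_of_lt hy3 h
      nlinarith
  · intro a₁ ha
    refine ⟨sqrt_gt_one ha, ?_⟩
    obtain ⟨hmem, hval⟩ := key_point ha
    set r := Real.sqrt (1 + a₁ ^ 2) with hrdef
    set f : ℝ × ℝ → ℝ := fun p => -p.1 - a₁ * p.2 with hf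
    have hub : ∀ z ∈ f '' quarterDisc, z ≤ 0 := by
      rintro z ⟨p, ⟨hp1, hp2, hp3⟩, rfl⟩
      simp only [hf]
      nlinarith
    have hlb : ∀ z ∈ f '' quarterDisc, -1 - a₁ ≤ z := by
      rintro z ⟨p, ⟨hp1, hp2, hp3⟩, rfl⟩
      simp only [hf]
      have h1 : p.1 ≤ 1 := by nlinarith
      have h2 : p.2 ≤ 1 := by nlinarith
      nlinarith
    have h0 : (0 : ℝ) ∈ f '' quarterDisc :=
      ⟨(0, 0), ⟨by norm_num, le_refl _, le_refl _⟩, by simp [hf]⟩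
    have hsup : (0 : ℝ) ≤ sSup (f '' quarterDisc) := le_csSup ⟨0, hub⟩ h0
    have hinf : sInf (f '' quarterDisc) ≤ -r := by
      have : (-r : ℝ) ∈ f '' quarterDisc := ⟨(1/r, a₁/r), hmem, hval⟩
      exact csInf_le ⟨-1 - a₁, hlb⟩ this
    linarith
  · rintro ⟨a₁, b, ha, hall⟩
    obtain ⟨hmem, hval⟩ := key_point ha
    set r := Real.sqrt (1 + a₁ ^ 2) with hrdef
    have h0 : |(-(0:ℝ)) - (a₁ * 0 + b)| ≤ 1/2 := hall (0, 0) ⟨by norm_num, le_refl _, le_refl _⟩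
    have h1 : |(-(1/r)) - (a₁ * (a₁/r) + b)| ≤ 1/2 := hall (1/r, a₁/r) hmem
    have heq : (-(1/r)) - (a₁ * (a₁/r) + b) = -r - b := by
      have : -(1/r) - a₁ * (a₁/r) = -r := hval
      linarith
    rw [heq] at h1
    have hb := abs_le.1 (by simpa using h0)
    have h1' := abs_le.1 h1
    have := sqrt_gt_one ha
    rw [← hrdef] at this
    linarith [h1'.1, h1'.2, hb.1, hb.2]
end

section
/- Let X = {(x₁, x₂) ∈ ℝ² : x₁² + x₂² ≤ 1, x₁ ≥ 0, x₂ ≥ 0}, and define u₀, u₁ : X → ℝ by u₀(x₁, x₂) = −x₁ and u₁(x₁, x₂) = x₂. Then the pair (u₀, {u₁}) does not satisfy Sequential 1-Strong Pareto: there exist sequences (x_n), (y_n) in X with u₁(x_n) > u₁(y_n) for all n and lim_{n→∞} (u₀(y_n) − u₀(x_n) − 1)/(u₁(x_n) − u₁(y_n)) = 0, so in particular liminf_{n→∞} (u₀(y_n) − u₀(x_n) − 1)/(u₁(x_n) − u₁(y_n)) ≥ 0. -/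
/-- Example: failure of Sequential 1-Strong Pareto.
With `u₀(x₁,x₂) = −x₁` and `u₁(x₁,x₂) = x₂` on the quarter disc, there exist
sequences `(x_n), (y_n)` in `X` with `u₁(x_n) > u₁(y_n)` for all `n` and
`lim (u₀(y_n) − u₀(x_n) − 1)/(u₁(x_n) − u₁(y_n)) = 0`, so in particular the
corresponding limit inferior is `≥ 0`; hence `(u₀, {u₁})` violates condition (b)
of Sequential 1-Strong Pareto. -/
theorem stmt16 :
    ∃ xs ys : ℕ → ℝ × ℝ,
      (∀ n, xs n ∈ quarterDisc) ∧ (∀ n, ys n ∈ quarterDisc) ∧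
      (∀ n, (ys n).2 < (xs n).2) ∧
      Filter.Tendsto
        (fun n => ((-(ys n).1) - (-(xs n).1) - 1) / ((xs n).2 - (ys n).2))
        Filter.atTop (nhds 0) ∧
      0 ≤ Filter.liminf
        (fun n => ((-(ys n).1) - (-(xs n).1) - 1) / ((xs n).2 - (ys n).2))
        Filter.atTop := by
  set t : ℕ → ℝ := fun n => 1 / (n + 1) with ht
  have ht0 : ∀ n, 0 < t n := fun n => by positivity
  have ht1 : ∀ n, t n ≤ 1 := fun n => by
    rw [ht]
    simp only
    rw [div_le_one (by positivity)]
    linarith [Nat.cast_nonneg (α := ℝ) n]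
  have hsq : ∀ n, 0 ≤ 1 - t n ^ 2 := fun n => by nlinarith [ht0 n, ht1 n]
  refine ⟨fun n => (Real.sqrt (1 - t n ^ 2), t n), fun _ => (0, 0), ?_, ?_, ?_, ?_, ?_⟩
  · intro n
    refine ⟨?_, Real.sqrt_nonneg _, (ht0 n).le⟩
    rw [Real.sq_sqrt (hsq n)]
    linarith
  · intro n; exact ⟨by norm_num, le_refl _, le_refl _⟩
  · intro n; exact ht0 n
  · -- tendsto: expression = (√(1-t²) - 1)/t, squeeze between -t and 0
    have key : ∀ n, (-(0:ℝ) - -Real.sqrt (1 - t n ^ 2) - 1) / (t n - 0)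
        = (Real.sqrt (1 - t n ^ 2) - 1) / t n := fun n => by ring_nf
    have hlow : ∀ n, -(t n) ≤ (Real.sqrt (1 - t n ^ 2) - 1) / t n := by
      intro n
      rw [le_div_iff₀ (ht0 n)]
      have h1 : 1 - t n ^ 2 ≤ Real.sqrt (1 - t n ^ 2) := by
        nlinarith [Real.sq_sqrt (hsq n), Real.sqrt_nonneg (1 - t n ^ 2), ht0 n, ht1 n]
      nlinarith [ht0 n]
    have hhigh : ∀ n, (Real.sqrt (1 - t n ^ 2) - 1) / t n ≤ 0 := by
      intro n
      apply div_nonpos_of_nonpos_of_nonneg _ (ht0 n).le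
      have : Real.sqrt (1 - t n ^ 2) ≤ 1 :=
        Real.sqrt_le_one.mpr (by nlinarith [ht0 n])
      linarith
    have htt : Filter.Tendsto (fun n => -(t n)) Filter.atTop (nhds 0) := by
      rw [ht, show (0:ℝ) = -0 by ring]
      exact (tendsto_one_div_add_atTop_nhds_zero_nat).neg
    simp only [key]
    exact tendsto_of_tendsto_of_tendsto_of_le_of_le htt tendsto_const_nhds hlow hhigh
  · have key : ∀ n, (-(0:ℝ) - -Real.sqrt (1 - t n ^ 2) - 1) / (t n - 0)
        = (Real.sqrt (1 - t n ^ 2) - 1) / t n := fun n => by ring_nf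
    have hlow : ∀ n, -(t n) ≤ (Real.sqrt (1 - t n ^ 2) - 1) / t n := by
      intro n
      rw [le_div_iff₀ (ht0 n)]
      have h1 : 1 - t n ^ 2 ≤ Real.sqrt (1 - t n ^ 2) := by
        nlinarith [Real.sq_sqrt (hsq n), Real.sqrt_nonneg (1 - t n ^ 2), ht0 n, ht1 n]
      nlinarith [ht0 n]
    have hhigh : ∀ n, (Real.sqrt (1 - t n ^ 2) - 1) / t n ≤ 0 := by
      intro n
      apply div_nonpos_of_nonpos_of_nonneg _ (ht0 n).le
      have : Real.sqrt (1 - t n ^ 2) ≤ 1 :=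
        Real.sqrt_le_one.mpr (by nlinarith [ht0 n])
      linarith
    have htt : Filter.Tendsto (fun n => -(t n)) Filter.atTop (nhds 0) := by
      rw [ht, show (0:ℝ) = -0 by ring]
      exact (tendsto_one_div_add_atTop_nhds_zero_nat).neg
    have hT := tendsto_of_tendsto_of_tendsto_of_le_of_le htt tendsto_const_nhds hlow hhigh
    have := hT.liminf_eq
    simp only [key]
    rw [this]
end

section
/- Let ε ≥ 0, let S be a nonempty finite set of states, let C be a nonempty set of consequences, and for each i = 1, …, N let μ_i : S → [0,1] with Σ_{s∈S} μ_i(s) = 1 be a probability vector and v_i : C → ℝ a bounded function with sup_{c∈C} |v_i(c) − v₁(c)| ≤ ε/2. Define utilities over acts f : S → C by u_i(f) = Σ_{s∈S} μ_i(s) v_i(f(s)). Let λ₁, …, λ_N ≥ 0 with Σ_{i=1}^N λ_i = 1, set u₀ = Σ_{i=1}^N λ_i u_i and μ = Σ_{i=1}^N λ_i μ_i. Then the subjective expected utility functional f ↦ Σ_{s∈S} μ(s) v₁(f(s)) satisfies |u₀(f) − Σ_{s∈S} μ(s) v₁(f(s))| ≤ ε/2 for every act f : S → C. -/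
/-- Let `ε ≥ 0`, let `S` be a nonempty finite set of states, `C` a
nonempty set of consequences, and for each `i` let `μᵢ` be a probability vector on `S`
and `vᵢ : C → ℝ` with `sup_c |vᵢ(c) − v₁(c)| ≤ ε/2`.  With `uᵢ(f) = Σ_s μᵢ(s) vᵢ(f(s))`,
`u₀ = Σᵢ λᵢ uᵢ`, and `μ = Σᵢ λᵢ μᵢ`, the SEU functional `f ↦ Σ_s μ(s) v₁(f(s))`
satisfies `|u₀(f) − Σ_s μ(s) v₁(f(s))| ≤ ε/2` for every act `f : S → C`. -/
theorem stmt17 {S C : Type*} [Fintype S] [Nonempty S] [Nonempty C]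
    {N : ℕ} (hN : 1 ≤ N) {ε : ℝ} (hε : 0 ≤ ε)
    (μ : Fin N → S → ℝ) (hμ0 : ∀ i s, 0 ≤ μ i s) (hμ1 : ∀ i, ∑ s, μ i s = 1)
    (v : Fin N → C → ℝ)
    (hv : ∀ i, ∀ c, |v i c - v ⟨0, hN⟩ c| ≤ ε / 2)
    (l : Fin N → ℝ) (hl0 : ∀ i, 0 ≤ l i) (hl1 : ∑ i, l i = 1) :
    ∀ f : S → C,
      |(∑ i, l i * ∑ s, μ i s * v i (f s)) -
        ∑ s, (∑ i, l i * μ i s) * v ⟨0, hN⟩ (f s)| ≤ ε / 2 := by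
  intro f
  have key : (∑ i, l i * ∑ s, μ i s * v i (f s)) -
      ∑ s, (∑ i, l i * μ i s) * v ⟨0, hN⟩ (f s)
      = ∑ i, l i * ∑ s, μ i s * (v i (f s) - v ⟨0, hN⟩ (f s)) := by
    have h2 : ∑ s, (∑ i, l i * μ i s) * v ⟨0, hN⟩ (f s)
        = ∑ i, l i * ∑ s, μ i s * v ⟨0, hN⟩ (f s) := by
      simp only [Finset.sum_mul, Finset.mul_sum]
      rw [Finset.sum_comm]
      simp [mul_assoc]
    rw [h2, ← Finset.sum_sub_distrib]
    refine Finset.sum_congr rfl fun i _ => ?_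
    rw [← mul_sub, ← Finset.sum_sub_distrib]
    congr 1
    exact Finset.sum_congr rfl fun s _ => by ring
  rw [key]
  calc |∑ i, l i * ∑ s, μ i s * (v i (f s) - v ⟨0, hN⟩ (f s))|
      ≤ ∑ i, |l i * ∑ s, μ i s * (v i (f s) - v ⟨0, hN⟩ (f s))| :=
        Finset.abs_sum_le_sum_abs _ _
    _ ≤ ∑ i : Fin N, l i * (ε / 2) := by
        apply Finset.sum_le_sum
        intro i _
        rw [abs_mul, abs_of_nonneg (hl0 i)]
        apply mul_le_mul_of_nonneg_left _ (hl0 i)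
        calc |∑ s, μ i s * (v i (f s) - v ⟨0, hN⟩ (f s))|
            ≤ ∑ s, |μ i s * (v i (f s) - v ⟨0, hN⟩ (f s))| :=
              Finset.abs_sum_le_sum_abs _ _
          _ ≤ ∑ s : S, μ i s * (ε / 2) := by
              apply Finset.sum_le_sum
              intro s _
              rw [abs_mul, abs_of_nonneg (hμ0 i s)]
              exact mul_le_mul_of_nonneg_left (hv i (f s)) (hμ0 i s)
          _ = ε / 2 := by rw [← Finset.sum_mul, hμ1 i, one_mul]
    _ = ε / 2 := by rw [← Finset.sum_mul, hl1, one_mul]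
end
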